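/- Every kind, family, and object typable in LF_Δ is strongly normalizing with respect to →_Δ: if Γ ⊢_Σ K then K is strongly normalizing; if Γ ⊢_Σ σ : K then σ is strongly normalizing; if Γ ⊢_Σ Δ : σ then Δ is strongly normalizing. -/

import Mathlib

set_option autoImplicit false

namespace LFDelta

/-- Equivalence closure of a relation (conversion). -/
inductive Conv {α : Type} (r : α → α → Prop) : α → α → Prop
| rel {a b : α} : r a b → Conv r a b
| refl (a : α) : Conv r a a
| symm {a b : α} : Conv r a b → Conv r b a
| trans {a b c : α} : Conv r a b → Conv r b c → Conv r a c

/-- Types of the intersection-union type assignment system B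
    (with ⊤, used only for the extended system B⁺). -/
inductive BTy : Type
| atom (a : ℕ)
| top
| arr (σ τ : BTy)
| inter (σ τ : BTy)
| union (σ τ : BTy)
deriving DecidableEq

/-- ω-free types of system B. -/
def BTy.OmegaFree : BTy → Prop
| .atom _ => True
| .top => False
| .arr σ τ => σ.OmegaFree ∧ τ.OmegaFree
| .inter σ τ => σ.OmegaFree ∧ τ.OmegaFree
| .union σ τ => σ.OmegaFree ∧ τ.OmegaFree

/-- Untyped λ-terms (de Bruijn), possibly containing constants
    (the constants c, c_× and c_{|σ|} are used for translations). -/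
inductive Lam : Type
| var (n : ℕ)
| app (M N : Lam)
| lam (M : Lam)
| const (c : ℕ)
| cx
| cty (σ : BTy)
deriving DecidableEq

namespace Lam

/-- Pure λ-terms: no constants. -/
def Pure : Lam → Prop
| .var _ => True
| .app M N => Pure M ∧ Pure N
| .lam M => Pure M
| _ => False

/-- Lift (shift) free variables ≥ c by one. -/
def lift (c : ℕ) : Lam → Lam
| .var n => if n < c then .var n else .var (n+1)
| .app M N => .app (lift c M) (lift c N)
| .lam M => .lam (lift (c+1) M)
| .const k => .const k
| .cx => .cx
| .cty σ => .cty σ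

/-- Substitute N for variable k. -/
def subst (k : ℕ) (N : Lam) : Lam → Lam
| .var n => if n < k then .var n else if n = k then (lift 0)^[k] N else .var (n-1)
| .app M₁ M₂ => .app (subst k N M₁) (subst k N M₂)
| .lam M => .lam (subst (k+1) N M)
| .const c => .const c
| .cx => .cx
| .cty σ => .cty σ

/-- One-step β-reduction. -/
inductive StepB : Lam → Lam → Prop
| beta {M N : Lam} : StepB (.app (.lam M) N) (subst 0 N M)
| appL {M M' N : Lam} : StepB M M' → StepB (.app M N) (.app M' N)
| appR {M N N' : Lam} : StepB N N' → StepB (.app M N) (.app M N')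
| lam {M M' : Lam} : StepB M M' → StepB (.lam M) (.lam M')

/-- One-step η-reduction. -/
inductive StepE : Lam → Lam → Prop
| eta {M : Lam} : StepE (.lam (.app (lift 0 M) (.var 0))) M
| appL {M M' N : Lam} : StepE M M' → StepE (.app M N) (.app M' N)
| appR {M N N' : Lam} : StepE N N' → StepE (.app M N) (.app M N')
| lam {M M' : Lam} : StepE M M' → StepE (.lam M) (.lam M')

/-- β-convertibility. -/
def BetaEq : Lam → Lam → Prop := Conv StepB

/-- βη-convertibility. -/
def BetaEtaEq : Lam → Lam → Prop := Conv (fun a b => StepB a b ∨ StepE a b)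

/-- Strong β-normalization. -/
def SNBeta (M : Lam) : Prop := Acc (fun a b => StepB b a) M

end Lam

/-- The subtype theory Ξ of system B without the ω-axioms (5) and (13),
    i.e. axioms/rules (1)-(4), (6)-(12), (14). -/
inductive SubB : BTy → BTy → Prop
| idemInter {σ : BTy} : SubB σ (.inter σ σ)                                  -- (1)
| idemUnion {σ : BTy} : SubB (.union σ σ) σ                                  -- (2)
| interL {σ τ : BTy} : SubB (.inter σ τ) σ                                   -- (3)
| interR {σ τ : BTy} : SubB (.inter σ τ) τ                                   -- (3)
| unionL {σ τ : BTy} : SubB σ (.union σ τ)                                   -- (4)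
| unionR {σ τ : BTy} : SubB τ (.union σ τ)                                   -- (4)
| refl {σ : BTy} : SubB σ σ                                                  -- (6)
| monoInter {σ₁ σ₂ τ₁ τ₂ : BTy} :
    SubB σ₁ σ₂ → SubB τ₁ τ₂ → SubB (.inter σ₁ τ₁) (.inter σ₂ τ₂)             -- (7)
| monoUnion {σ₁ σ₂ τ₁ τ₂ : BTy} :
    SubB σ₁ σ₂ → SubB τ₁ τ₂ → SubB (.union σ₁ τ₁) (.union σ₂ τ₂)             -- (8)
| trans {σ τ ρ : BTy} : SubB σ τ → SubB τ ρ → SubB σ ρ                        -- (9)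
| dist {σ τ ρ : BTy} :
    SubB (.inter σ (.union τ ρ)) (.union (.inter σ τ) (.inter σ ρ))          -- (10)
| arrInter {σ τ ρ : BTy} :
    SubB (.inter (.arr σ τ) (.arr σ ρ)) (.arr σ (.inter τ ρ))                -- (11)
| arrUnion {σ τ ρ : BTy} :
    SubB (.inter (.arr σ ρ) (.arr τ ρ)) (.arr (.union σ τ) ρ)                -- (12)
| arrow {σ₁ σ₂ τ₁ τ₂ : BTy} :
    SubB σ₂ σ₁ → SubB τ₁ τ₂ → SubB (.arr σ₁ τ₁) (.arr σ₂ τ₂)                  -- (14)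

/-- The subtype theory Ξ' (Ξ without (5), (10), (13)), parametrized by
    additional axioms `ax`. -/
inductive Xi' (ax : BTy → BTy → Prop) : BTy → BTy → Prop
| ax {σ τ : BTy} : ax σ τ → Xi' ax σ τ
| idemInter {σ : BTy} : Xi' ax σ (.inter σ σ)
| idemUnion {σ : BTy} : Xi' ax (.union σ σ) σ
| interL {σ τ : BTy} : Xi' ax (.inter σ τ) σ
| interR {σ τ : BTy} : Xi' ax (.inter σ τ) τ
| unionL {σ τ : BTy} : Xi' ax σ (.union σ τ)
| unionR {σ τ : BTy} : Xi' ax τ (.union σ τ)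
| refl {σ : BTy} : Xi' ax σ σ
| monoInter {σ₁ σ₂ τ₁ τ₂ : BTy} :
    Xi' ax σ₁ σ₂ → Xi' ax τ₁ τ₂ → Xi' ax (.inter σ₁ τ₁) (.inter σ₂ τ₂)
| monoUnion {σ₁ σ₂ τ₁ τ₂ : BTy} :
    Xi' ax σ₁ σ₂ → Xi' ax τ₁ τ₂ → Xi' ax (.union σ₁ τ₁) (.union σ₂ τ₂)
| trans {σ τ ρ : BTy} : Xi' ax σ τ → Xi' ax τ ρ → Xi' ax σ ρ
| arrInter {σ τ ρ : BTy} :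
    Xi' ax (.inter (.arr σ τ) (.arr σ ρ)) (.arr σ (.inter τ ρ))
| arrUnion {σ τ ρ : BTy} :
    Xi' ax (.inter (.arr σ ρ) (.arr τ ρ)) (.arr (.union σ τ) ρ)
| arrow {σ₁ σ₂ τ₁ τ₂ : BTy} :
    Xi' ax σ₂ σ₁ → Xi' ax τ₁ τ₂ → Xi' ax (.arr σ₁ τ₁) (.arr σ₂ τ₂)

/-- Type assignment of system B (Curry style), extended with constant
    typing axioms `ξ` and the constants c_× and c_{|σ|} of B⁺.
    With `ξ := fun _ _ => False` and on pure terms this is exactly system B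
    without ω. -/
inductive BPlus (ξ : ℕ → BTy → Prop) : List BTy → Lam → BTy → Prop
| var {Γ : List BTy} {n : ℕ} {σ : BTy} :
    Γ[n]? = some σ → BPlus ξ Γ (.var n) σ
| const {Γ : List BTy} {c : ℕ} {σ : BTy} : ξ c σ → BPlus ξ Γ (.const c) σ
| cx {Γ : List BTy} : BPlus ξ Γ .cx (.arr .top (.arr .top .top))
| cty {Γ : List BTy} {σ : BTy} :
    BPlus ξ Γ (.cty σ) (.arr .top (.arr (.arr σ .top) .top))
| abs {Γ : List BTy} {M : Lam} {σ τ : BTy} :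
    BPlus ξ (σ :: Γ) M τ → BPlus ξ Γ (.lam M) (.arr σ τ)
| app {Γ : List BTy} {M N : Lam} {σ τ : BTy} :
    BPlus ξ Γ M (.arr σ τ) → BPlus ξ Γ N σ → BPlus ξ Γ (.app M N) τ
| interI {Γ : List BTy} {M : Lam} {σ τ : BTy} :
    BPlus ξ Γ M σ → BPlus ξ Γ M τ → BPlus ξ Γ M (.inter σ τ)
| interEl {Γ : List BTy} {M : Lam} {σ τ : BTy} :
    BPlus ξ Γ M (.inter σ τ) → BPlus ξ Γ M σ
| interEr {Γ : List BTy} {M : Lam} {σ τ : BTy} :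
    BPlus ξ Γ M (.inter σ τ) → BPlus ξ Γ M τ
| unionIl {Γ : List BTy} {M : Lam} {σ τ : BTy} :
    BPlus ξ Γ M σ → BPlus ξ Γ M (.union σ τ)
| unionIr {Γ : List BTy} {M : Lam} {σ τ : BTy} :
    BPlus ξ Γ M τ → BPlus ξ Γ M (.union σ τ)
| unionE {Γ : List BTy} {M N : Lam} {σ τ ρ : BTy} :
    BPlus ξ (σ :: Γ) M ρ → BPlus ξ (τ :: Γ) M ρ → BPlus ξ Γ N (.union σ τ) →
    BPlus ξ Γ (Lam.subst 0 N M) ρ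
| sub {Γ : List BTy} {M : Lam} {σ τ : BTy} :
    BPlus ξ Γ M σ → SubB σ τ → BPlus ξ Γ M τ

/-- The pseudo-terms of LF_Δ: kinds, families and objects in a single syntax
    (the typing judgments single out each syntactic class). -/
inductive Tm : Type
| type                        -- the kind Type
| pi (σ τ : Tm)               -- Πx:σ.K and Πx:σ.τ
| rarr (σ τ : Tm)             -- relevant family σ →ʳ τ
| inter (σ τ : Tm)            -- intersection family
| union (σ τ : Tm)            -- union family
| const (c : ℕ)               -- constants (family- and object-level)
| var (n : ℕ)                 -- variables (de Bruijn)
| lam (σ Δ : Tm)              -- λx:σ.Δ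
| app (Δ₁ Δ₂ : Tm)            -- application (of families and of objects)
| rlam (σ Δ : Tm)             -- relevant abstraction λʳx:σ.Δ
| rapp (Δ₁ Δ₂ : Tm)           -- relevant application
| pair (Δ₁ Δ₂ : Tm)           -- strong pair ⟨Δ₁,Δ₂⟩
| copair (Δ₁ Δ₂ : Tm)         -- strong co-pair [Δ₁,Δ₂]
| prl (Δ : Tm)                -- left projection
| prr (Δ : Tm)                -- right projection
| inl (σ Δ : Tm)              -- injection in_l^σ Δ
| inr (σ Δ : Tm)              -- injection in_r^σ Δ
deriving DecidableEq

namespace Tm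

/-- Lift free variables ≥ c by one. -/
def lift (c : ℕ) : Tm → Tm
| .type => .type
| .pi σ τ => .pi (lift c σ) (lift (c+1) τ)
| .rarr σ τ => .rarr (lift c σ) (lift c τ)
| .inter σ τ => .inter (lift c σ) (lift c τ)
| .union σ τ => .union (lift c σ) (lift c τ)
| .const k => .const k
| .var n => if n < c then .var n else .var (n+1)
| .lam σ Δ => .lam (lift c σ) (lift (c+1) Δ)
| .app Δ₁ Δ₂ => .app (lift c Δ₁) (lift c Δ₂)
| .rlam σ Δ => .rlam (lift c σ) (lift (c+1) Δ)
| .rapp Δ₁ Δ₂ => .rapp (lift c Δ₁) (lift c Δ₂)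
| .pair Δ₁ Δ₂ => .pair (lift c Δ₁) (lift c Δ₂)
| .copair Δ₁ Δ₂ => .copair (lift c Δ₁) (lift c Δ₂)
| .prl Δ => .prl (lift c Δ)
| .prr Δ => .prr (lift c Δ)
| .inl σ Δ => .inl (lift c σ) (lift c Δ)
| .inr σ Δ => .inr (lift c σ) (lift c Δ)

/-- Substitute the object N for variable k. -/
def subst (k : ℕ) (N : Tm) : Tm → Tm
| .type => .type
| .pi σ τ => .pi (subst k N σ) (subst (k+1) N τ)
| .rarr σ τ => .rarr (subst k N σ) (subst k N τ)
| .inter σ τ => .inter (subst k N σ) (subst k N τ)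
| .union σ τ => .union (subst k N σ) (subst k N τ)
| .const c => .const c
| .var n => if n < k then .var n else if n = k then (lift 0)^[k] N else .var (n-1)
| .lam σ Δ => .lam (subst k N σ) (subst (k+1) N Δ)
| .app Δ₁ Δ₂ => .app (subst k N Δ₁) (subst k N Δ₂)
| .rlam σ Δ => .rlam (subst k N σ) (subst (k+1) N Δ)
| .rapp Δ₁ Δ₂ => .rapp (subst k N Δ₁) (subst k N Δ₂)
| .pair Δ₁ Δ₂ => .pair (subst k N Δ₁) (subst k N Δ₂)
| .copair Δ₁ Δ₂ => .copair (subst k N Δ₁) (subst k N Δ₂)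
| .prl Δ => .prl (subst k N Δ)
| .prr Δ => .prr (subst k N Δ)
| .inl σ Δ => .inl (subst k N σ) (subst k N Δ)
| .inr σ Δ => .inr (subst k N σ) (subst k N Δ)

end Tm

/-- The essence function: compositionally erases all type annotations and
    proof-functional constructs (on non-objects it returns a dummy value). -/
def essence : Tm → Lam
| .var n => .var n
| .const c => .const c
| .lam _ Δ => .lam (essence Δ)
| .rlam _ Δ => .lam (essence Δ)
| .app Δ₁ Δ₂ => .app (essence Δ₁) (essence Δ₂)
| .rapp _ Δ₂ => essence Δ₂
| .pair Δ₁ _ => essence Δ₁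
| .copair Δ₁ _ => essence Δ₁
| .prl Δ => essence Δ
| .prr Δ => essence Δ
| .inl _ Δ => essence Δ
| .inr _ Δ => essence Δ
| .type => .const 0
| .pi _ _ => .const 0
| .rarr _ _ => .const 0
| .inter _ _ => .const 0
| .union _ _ => .const 0

/-- One-step reduction →_Δ of LF_Δ. Congruence rules are standard, except
    that the components of strong pairs and co-pairs must reduce in parallel,
    keeping identical essences. -/
inductive Step : Tm → Tm → Prop
| beta {σ Δ₁ Δ₂ : Tm} : Step (.app (.lam σ Δ₁) Δ₂) (Tm.subst 0 Δ₂ Δ₁)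
| rbeta {σ Δ₁ Δ₂ : Tm} : Step (.rapp (.rlam σ Δ₁) Δ₂) (Tm.subst 0 Δ₂ Δ₁)
| prl {Δ₁ Δ₂ : Tm} : Step (.prl (.pair Δ₁ Δ₂)) Δ₁
| prr {Δ₁ Δ₂ : Tm} : Step (.prr (.pair Δ₁ Δ₂)) Δ₂
| coInl {Δ₁ Δ₂ σ Δ₃ : Tm} :
    Step (.app (.copair Δ₁ Δ₂) (.inl σ Δ₃)) (.app Δ₁ Δ₃)
| coInr {Δ₁ Δ₂ σ Δ₃ : Tm} :
    Step (.app (.copair Δ₁ Δ₂) (.inr σ Δ₃)) (.app Δ₂ Δ₃)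
| piL {σ σ' τ : Tm} : Step σ σ' → Step (.pi σ τ) (.pi σ' τ)
| piR {σ τ τ' : Tm} : Step τ τ' → Step (.pi σ τ) (.pi σ τ')
| rarrL {σ σ' τ : Tm} : Step σ σ' → Step (.rarr σ τ) (.rarr σ' τ)
| rarrR {σ τ τ' : Tm} : Step τ τ' → Step (.rarr σ τ) (.rarr σ τ')
| interL {σ σ' τ : Tm} : Step σ σ' → Step (.inter σ τ) (.inter σ' τ)
| interR {σ τ τ' : Tm} : Step τ τ' → Step (.inter σ τ) (.inter σ τ')
| unionL {σ σ' τ : Tm} : Step σ σ' → Step (.union σ τ) (.union σ' τ)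
| unionR {σ τ τ' : Tm} : Step τ τ' → Step (.union σ τ) (.union σ τ')
| lamL {σ σ' Δ : Tm} : Step σ σ' → Step (.lam σ Δ) (.lam σ' Δ)
| lamR {σ Δ Δ' : Tm} : Step Δ Δ' → Step (.lam σ Δ) (.lam σ Δ')
| rlamL {σ σ' Δ : Tm} : Step σ σ' → Step (.rlam σ Δ) (.rlam σ' Δ)
| rlamR {σ Δ Δ' : Tm} : Step Δ Δ' → Step (.rlam σ Δ) (.rlam σ Δ')
| appL {Δ₁ Δ₁' Δ₂ : Tm} : Step Δ₁ Δ₁' → Step (.app Δ₁ Δ₂) (.app Δ₁' Δ₂)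
| appR {Δ₁ Δ₂ Δ₂' : Tm} : Step Δ₂ Δ₂' → Step (.app Δ₁ Δ₂) (.app Δ₁ Δ₂')
| rappL {Δ₁ Δ₁' Δ₂ : Tm} : Step Δ₁ Δ₁' → Step (.rapp Δ₁ Δ₂) (.rapp Δ₁' Δ₂)
| rappR {Δ₁ Δ₂ Δ₂' : Tm} : Step Δ₂ Δ₂' → Step (.rapp Δ₁ Δ₂) (.rapp Δ₁ Δ₂')
| prlC {Δ Δ' : Tm} : Step Δ Δ' → Step (.prl Δ) (.prl Δ')
| prrC {Δ Δ' : Tm} : Step Δ Δ' → Step (.prr Δ) (.prr Δ')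
| inlL {σ σ' Δ : Tm} : Step σ σ' → Step (.inl σ Δ) (.inl σ' Δ)
| inlR {σ Δ Δ' : Tm} : Step Δ Δ' → Step (.inl σ Δ) (.inl σ Δ')
| inrL {σ σ' Δ : Tm} : Step σ σ' → Step (.inr σ Δ) (.inr σ' Δ)
| inrR {σ Δ Δ' : Tm} : Step Δ Δ' → Step (.inr σ Δ) (.inr σ Δ')
| pairC {Δ₁ Δ₁' Δ₂ Δ₂' : Tm} :
    Step Δ₁ Δ₁' → Step Δ₂ Δ₂' → essence Δ₁' = essence Δ₂' →
    Step (.pair Δ₁ Δ₂) (.pair Δ₁' Δ₂')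
| copairC {Δ₁ Δ₁' Δ₂ Δ₂' : Tm} :
    Step Δ₁ Δ₁' → Step Δ₂ Δ₂' → essence Δ₁' = essence Δ₂' →
    Step (.copair Δ₁ Δ₂) (.copair Δ₁' Δ₂')

/-- Definitional equality =_Δ : the symmetric reflexive transitive closure
    of →_Δ. -/
def DefEq : Tm → Tm → Prop := Conv Step

/-- Strong normalization w.r.t. →_Δ. -/
def SNTm (t : Tm) : Prop := Acc (fun a b => Step b a) t

/-- Signature entries: kind declarations a:K and type declarations c:σ. -/
inductive SigEntry : Type
| kd (a : ℕ) (K : Tm)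
| ty (c : ℕ) (σ : Tm)
deriving DecidableEq

abbrev Sig := List SigEntry
abbrev Ctx := List Tm

/-- c is declared in the signature. -/
def inDom (S : Sig) (c : ℕ) : Prop :=
  (∃ K, SigEntry.kd c K ∈ S) ∨ (∃ σ, SigEntry.ty c σ ∈ S)

/-- Context lookup, with the appropriate lifting. -/
inductive VarTy : Ctx → ℕ → Tm → Prop
| zero {Γ : Ctx} {σ : Tm} : VarTy (σ :: Γ) 0 (Tm.lift 0 σ)
| succ {Γ : Ctx} {n : ℕ} {σ τ : Tm} :
    VarTy Γ n σ → VarTy (τ :: Γ) (n+1) (Tm.lift 0 σ)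

mutual
/-- Σ is a valid signature. -/
inductive SigOk : Sig → Prop
| nil : SigOk []
| kd {S : Sig} {a : ℕ} {K : Tm} :
    SigOk S → KindOk S [] K → ¬ inDom S a → SigOk (.kd a K :: S)
| ty {S : Sig} {c : ℕ} {σ : Tm} :
    SigOk S → FamTy S [] σ .type → ¬ inDom S c → SigOk (.ty c σ :: S)

/-- Γ is a valid context in Σ. -/
inductive CtxOk : Sig → Ctx → Prop
| nil {S : Sig} : SigOk S → CtxOk S []
| cons {S : Sig} {Γ : Ctx} {σ : Tm} :
    CtxOk S Γ → FamTy S Γ σ .type → CtxOk S (σ :: Γ)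

/-- K is a kind in Γ and Σ. -/
inductive KindOk : Sig → Ctx → Tm → Prop
| type {S : Sig} {Γ : Ctx} : CtxOk S Γ → KindOk S Γ .type
| pi {S : Sig} {Γ : Ctx} {σ K : Tm} :
    FamTy S Γ σ .type → KindOk S (σ :: Γ) K → KindOk S Γ (.pi σ K)

/-- σ has kind K in Γ and Σ. -/
inductive FamTy : Sig → Ctx → Tm → Tm → Prop
| const {S : Sig} {Γ : Ctx} {a : ℕ} {K : Tm} :
    CtxOk S Γ → SigEntry.kd a K ∈ S → FamTy S Γ (.const a) K
| pi {S : Sig} {Γ : Ctx} {σ τ : Tm} :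
    FamTy S Γ σ .type → FamTy S (σ :: Γ) τ .type → FamTy S Γ (.pi σ τ) .type
| app {S : Sig} {Γ : Ctx} {σ τ K Δ : Tm} :
    FamTy S Γ σ (.pi τ K) → ObjTy S Γ Δ τ →
    FamTy S Γ (.app σ Δ) (Tm.subst 0 Δ K)
| rarr {S : Sig} {Γ : Ctx} {σ τ : Tm} :
    FamTy S Γ σ .type → FamTy S Γ τ .type → FamTy S Γ (.rarr σ τ) .type
| inter {S : Sig} {Γ : Ctx} {σ τ : Tm} :
    FamTy S Γ σ .type → FamTy S Γ τ .type → FamTy S Γ (.inter σ τ) .type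
| union {S : Sig} {Γ : Ctx} {σ τ : Tm} :
    FamTy S Γ σ .type → FamTy S Γ τ .type → FamTy S Γ (.union σ τ) .type
| conv {S : Sig} {Γ : Ctx} {σ K₁ K₂ : Tm} :
    FamTy S Γ σ K₁ → KindOk S Γ K₂ → DefEq K₁ K₂ → FamTy S Γ σ K₂

/-- Δ has type σ in Γ and Σ. -/
inductive ObjTy : Sig → Ctx → Tm → Tm → Prop
| const {S : Sig} {Γ : Ctx} {c : ℕ} {σ : Tm} :
    CtxOk S Γ → SigEntry.ty c σ ∈ S → ObjTy S Γ (.const c) σ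
| var {S : Sig} {Γ : Ctx} {n : ℕ} {σ : Tm} :
    CtxOk S Γ → VarTy Γ n σ → ObjTy S Γ (.var n) σ
| lam {S : Sig} {Γ : Ctx} {σ τ Δ : Tm} :
    ObjTy S (σ :: Γ) Δ τ → ObjTy S Γ (.lam σ Δ) (.pi σ τ)
| app {S : Sig} {Γ : Ctx} {σ τ Δ₁ Δ₂ : Tm} :
    ObjTy S Γ Δ₁ (.pi σ τ) → ObjTy S Γ Δ₂ σ →
    ObjTy S Γ (.app Δ₁ Δ₂) (Tm.subst 0 Δ₂ τ)
| rlam {S : Sig} {Γ : Ctx} {σ τ Δ : Tm} :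
    ObjTy S (σ :: Γ) Δ (Tm.lift 0 τ) →
    Lam.BetaEtaEq (essence Δ) (.var 0) →
    ObjTy S Γ (.rlam σ Δ) (.rarr σ τ)
| rapp {S : Sig} {Γ : Ctx} {σ τ Δ₁ Δ₂ : Tm} :
    ObjTy S Γ Δ₁ (.rarr σ τ) → ObjTy S Γ Δ₂ σ → ObjTy S Γ (.rapp Δ₁ Δ₂) τ
| pair {S : Sig} {Γ : Ctx} {σ τ Δ₁ Δ₂ : Tm} :
    ObjTy S Γ Δ₁ σ → ObjTy S Γ Δ₂ τ →
    Lam.BetaEtaEq (essence Δ₁) (essence Δ₂) →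
    ObjTy S Γ (.pair Δ₁ Δ₂) (.inter σ τ)
| prl {S : Sig} {Γ : Ctx} {σ τ Δ : Tm} :
    ObjTy S Γ Δ (.inter σ τ) → ObjTy S Γ (.prl Δ) σ
| prr {S : Sig} {Γ : Ctx} {σ τ Δ : Tm} :
    ObjTy S Γ Δ (.inter σ τ) → ObjTy S Γ (.prr Δ) τ
| inl {S : Sig} {Γ : Ctx} {σ τ Δ : Tm} :
    ObjTy S Γ Δ σ → FamTy S Γ (.union σ τ) .type →
    ObjTy S Γ (.inl τ Δ) (.union σ τ)
| inr {S : Sig} {Γ : Ctx} {σ τ Δ : Tm} :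
    ObjTy S Γ Δ τ → FamTy S Γ (.union σ τ) .type →
    ObjTy S Γ (.inr σ Δ) (.union σ τ)
| copair {S : Sig} {Γ : Ctx} {σ τ ρ Δ₁ Δ₂ : Tm} :
    ObjTy S Γ Δ₁
      (.pi σ (Tm.subst 0 (.inl (Tm.lift 0 τ) (.var 0)) (Tm.lift 1 ρ))) →
    ObjTy S Γ Δ₂
      (.pi τ (Tm.subst 0 (.inr (Tm.lift 0 σ) (.var 0)) (Tm.lift 1 ρ))) →
    FamTy S (.union σ τ :: Γ) ρ .type →
    Lam.BetaEtaEq (essence Δ₁) (essence Δ₂) →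
    ObjTy S Γ (.copair Δ₁ Δ₂) (.pi (.union σ τ) ρ)
| conv {S : Sig} {Γ : Ctx} {σ τ Δ : Tm} :
    ObjTy S Γ Δ σ → FamTy S Γ τ .type → DefEq σ τ → ObjTy S Γ Δ τ
end

/-- The dependency-erasing translation |·| on families and kinds. -/
def eraseTy : Tm → BTy
| .type => .top
| .pi σ τ => .arr (eraseTy σ) (eraseTy τ)
| .rarr σ τ => .arr (eraseTy σ) (eraseTy τ)
| .inter σ τ => .inter (eraseTy σ) (eraseTy τ)
| .union σ τ => .union (eraseTy σ) (eraseTy τ)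
| .const a => .atom a
| .app σ _ => eraseTy σ
| _ => .top

/-- The forgetful translation ‖·‖ of LF_Δ objects and families into pure
    λ-terms with constants, flattening type annotations into redexes. -/
def tr : Tm → Lam
| .type => .const 0
| .pi σ τ => .app (.app (.cty (eraseTy σ)) (tr σ)) (.lam (tr τ))
| .rarr σ τ => .app (.app .cx (tr σ)) (tr τ)
| .inter σ τ => .app (.app .cx (tr σ)) (tr τ)
| .union σ τ => .app (.app .cx (tr σ)) (tr τ)
| .const c => .const c
| .var n => .var n
| .lam σ Δ => .app (.lam (.lam (Lam.lift 1 (tr Δ)))) (tr σ)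
| .rlam σ Δ => .app (.lam (.lam (Lam.lift 1 (tr Δ)))) (tr σ)
| .app Δ₁ Δ₂ => .app (tr Δ₁) (tr Δ₂)
| .rapp Δ₁ Δ₂ => .app (tr Δ₁) (tr Δ₂)
| .pair Δ₁ _ => tr Δ₁
| .copair Δ₁ _ => tr Δ₁
| .prl Δ => tr Δ
| .prr Δ => tr Δ
| .inl σ Δ => .app (.lam (Lam.lift 0 (tr Δ))) (tr σ)
| .inr σ Δ => .app (.lam (Lam.lift 0 (tr Δ))) (tr σ)

/-- Constant typing axioms of B⁺ induced by a signature. -/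
def sigXi (S : Sig) : ℕ → BTy → Prop :=
  fun c τ => (∃ σ, SigEntry.ty c σ ∈ S ∧ τ = eraseTy σ) ∨
             (∃ K, SigEntry.kd c K ∈ S ∧ τ = eraseTy K)

/-- Embedding of (non-dependent, relevance-free) B types as LF_Δ families. -/
def toFam : BTy → Tm
| .atom a => .const a
| .top => .const 0
| .arr σ τ => .pi (toFam σ) (Tm.lift 0 (toFam τ))
| .inter σ τ => .inter (toFam σ) (toFam τ)
| .union σ τ => .union (toFam σ) (toFam τ)



/-! ### Auxiliary development: target calculus -/

/-- Simple types of the target calculus. -/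
inductive ST : Type
| top
| arr (A B : ST)
| prod (A B : ST)
| sum (A B : ST)

/-- Terms of the target calculus. -/
inductive TT : Type
| var (n : ℕ)
| cst (k : ℕ)
| lam (t : TT)
| app (s t : TT)
| pair (s t : TT)
| fst (t : TT)
| snd (t : TT)
| inl (t : TT)
| inr (t : TT)

namespace TT

def extr (ξ : ℕ → ℕ) : ℕ → ℕ
| 0 => 0
| n+1 => ξ n + 1

def ren (ξ : ℕ → ℕ) : TT → TT
| var n => var (ξ n)
| cst k => cst k
| lam t => lam (ren (extr ξ) t)
| app s t => app (ren ξ s) (ren ξ t)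
| pair s t => pair (ren ξ s) (ren ξ t)
| fst t => fst (ren ξ t)
| snd t => snd (ren ξ t)
| inl t => inl (ren ξ t)
| inr t => inr (ren ξ t)

def exts (ρ : ℕ → TT) : ℕ → TT
| 0 => var 0
| n+1 => ren Nat.succ (ρ n)

def sub (ρ : ℕ → TT) : TT → TT
| var n => ρ n
| cst k => cst k
| lam t => lam (sub (exts ρ) t)
| app s t => app (sub ρ s) (sub ρ t)
| pair s t => pair (sub ρ s) (sub ρ t)
| fst t => fst (sub ρ t)
| snd t => snd (sub ρ t)
| inl t => inl (sub ρ t)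
| inr t => inr (sub ρ t)

theorem ren_ext {ξ ζ : ℕ → ℕ} (h : ∀ n, ξ n = ζ n) : ∀ t, ren ξ t = ren ζ t := by
  intro t
  induction t generalizing ξ ζ with
  | var n => simp [ren, h]
  | cst k => rfl
  | lam t ih => simp [ren]; exact ih (fun n => by cases n <;> simp [extr, h])
  | app s t ihs iht => simp [ren, ihs h, iht h]
  | pair s t ihs iht => simp [ren, ihs h, iht h]
  | fst t ih => simp [ren, ih h]
  | snd t ih => simp [ren, ih h]
  | inl t ih => simp [ren, ih h]
  | inr t ih => simp [ren, ih h]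

theorem sub_ext {ρ ρ' : ℕ → TT} (h : ∀ n, ρ n = ρ' n) : ∀ t, sub ρ t = sub ρ' t := by
  intro t
  induction t generalizing ρ ρ' with
  | var n => simp [sub, h]
  | cst k => rfl
  | lam t ih => simp [sub]; exact ih (fun n => by cases n <;> simp [exts, h])
  | app s t ihs iht => simp [sub, ihs h, iht h]
  | pair s t ihs iht => simp [sub, ihs h, iht h]
  | fst t ih => simp [sub, ih h]
  | snd t ih => simp [sub, ih h]
  | inl t ih => simp [sub, ih h]
  | inr t ih => simp [sub, ih h]

theorem ren_ren (ξ ζ : ℕ → ℕ) : ∀ t, ren ξ (ren ζ t) = ren (fun n => ξ (ζ n)) t := by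
  intro t
  induction t generalizing ξ ζ with
  | var n => rfl
  | cst k => rfl
  | lam t ih =>
      simp [ren, ih]
      exact ren_ext (fun n => by cases n <;> simp [extr]) t
  | app s t ihs iht => simp [ren, ihs, iht]
  | pair s t ihs iht => simp [ren, ihs, iht]
  | fst t ih => simp [ren, ih]
  | snd t ih => simp [ren, ih]
  | inl t ih => simp [ren, ih]
  | inr t ih => simp [ren, ih]

theorem sub_ren (ρ : ℕ → TT) (ξ : ℕ → ℕ) : ∀ t, sub ρ (ren ξ t) = sub (fun n => ρ (ξ n)) t := by
  intro t
  induction t generalizing ρ ξ with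
  | var n => rfl
  | cst k => rfl
  | lam t ih =>
      simp [ren, sub, ih]
      exact sub_ext (fun n => by cases n <;> simp [extr, exts]) t
  | app s t ihs iht => simp [ren, sub, ihs, iht]
  | pair s t ihs iht => simp [ren, sub, ihs, iht]
  | fst t ih => simp [ren, sub, ih]
  | snd t ih => simp [ren, sub, ih]
  | inl t ih => simp [ren, sub, ih]
  | inr t ih => simp [ren, sub, ih]

theorem ren_sub (ξ : ℕ → ℕ) (ρ : ℕ → TT) : ∀ t, ren ξ (sub ρ t) = sub (fun n => ren ξ (ρ n)) t := by
  intro t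
  induction t generalizing ρ ξ with
  | var n => rfl
  | cst k => rfl
  | lam t ih =>
      simp [ren, sub, ih]
      exact sub_ext (fun n => by
        cases n with
        | zero => simp [extr, exts, ren]
        | succ n => simp [extr, exts, ren_ren]) t
  | app s t ihs iht => simp [ren, sub, ihs, iht]
  | pair s t ihs iht => simp [ren, sub, ihs, iht]
  | fst t ih => simp [ren, sub, ih]
  | snd t ih => simp [ren, sub, ih]
  | inl t ih => simp [ren, sub, ih]
  | inr t ih => simp [ren, sub, ih]

theorem sub_sub (ρ ρ' : ℕ → TT) : ∀ t, sub ρ (sub ρ' t) = sub (fun n => sub ρ (ρ' n)) t := by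
  intro t
  induction t generalizing ρ ρ' with
  | var n => rfl
  | cst k => rfl
  | lam t ih =>
      simp [sub, ih]
      exact sub_ext (fun n => by
        cases n with
        | zero => simp [exts, sub]
        | succ n => simp [exts, sub_ren, ren_sub]) t
  | app s t ihs iht => simp [sub, ihs, iht]
  | pair s t ihs iht => simp [sub, ihs, iht]
  | fst t ih => simp [sub, ih]
  | snd t ih => simp [sub, ih]
  | inl t ih => simp [sub, ih]
  | inr t ih => simp [sub, ih]

theorem sub_id : ∀ t, sub var t = t := by
  intro t
  induction t with
  | var n => rfl
  | cst k => rfl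
  | lam t ih =>
      simp [sub]
      rw [sub_ext (ρ' := var) (fun n => by cases n <;> simp [exts, ren]) t, ih]
  | app s t ihs iht => simp [sub, ihs, iht]
  | pair s t ihs iht => simp [sub, ihs, iht]
  | fst t ih => simp [sub, ih]
  | snd t ih => simp [sub, ih]
  | inl t ih => simp [sub, ih]
  | inr t ih => simp [sub, ih]

theorem ren_eq_sub (ξ : ℕ → ℕ) : ∀ t, ren ξ t = sub (fun n => var (ξ n)) t := by
  intro t
  induction t generalizing ξ with
  | var n => rfl
  | cst k => rfl
  | lam t ih =>
      simp [ren, sub, ih]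
      exact sub_ext (fun n => by cases n <;> simp [extr, exts, ren]) t
  | app s t ihs iht => simp [ren, sub, ihs, iht]
  | pair s t ihs iht => simp [ren, sub, ihs, iht]
  | fst t ih => simp [ren, sub, ih]
  | snd t ih => simp [ren, sub, ih]
  | inl t ih => simp [ren, sub, ih]
  | inr t ih => simp [ren, sub, ih]

/-- lifting function on indices -/
def liftF (c : ℕ) (n : ℕ) : ℕ := if n < c then n else n + 1

def lift (c : ℕ) : TT → TT := ren (liftF c)

def substF (k : ℕ) (N : TT) (n : ℕ) : TT :=
  if n < k then var n else if n = k then ren (· + k) N else var (n - 1)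

def subst (k : ℕ) (N : TT) : TT → TT := sub (substF k N)

end TT


namespace TT

theorem ren_id : ∀ t, ren (fun n => n) t = t := by
  intro t
  rw [ren_eq_sub, sub_ext (ρ' := var) (fun n => rfl) t, sub_id]

theorem ren_plus_zero : ∀ t, ren (· + 0) t = t := by
  intro t
  exact (ren_ext (ζ := fun n => n) (fun n => rfl) t).trans (ren_id t)

theorem substF_self (k : ℕ) (N : TT) : substF k N k = ren (· + k) N := by
  simp [substF]

theorem substF_zero_zero (N : TT) : substF 0 N 0 = N := by
  rw [substF_self, ren_plus_zero]

theorem liftF_ge {i n : ℕ} (h : i ≤ n) : liftF i n = n + 1 := by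
  simp only [liftF]; split_ifs <;> omega

theorem liftF_lt {i n : ℕ} (h : n < i) : liftF i n = n := by
  simp only [liftF]; split_ifs <;> omega

theorem exts_substF (k : ℕ) (N : TT) : ∀ n, exts (substF k N) n = substF (k+1) N n := by
  intro n
  cases n with
  | zero => simp [exts, substF]
  | succ n =>
      have e : exts (substF k N) (n+1) = ren Nat.succ (substF k N n) := rfl
      rw [e]
      rcases lt_trichotomy n k with h | h | h
      · have h1 : n + 1 < k + 1 := by omega
        simp only [substF, if_pos h, if_pos h1, ren]
      · subst h
        rw [substF_self]
        have h1 : substF (n+1) N (n+1) = ren (· + (n+1)) N := substF_self _ _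
        rw [h1, ren_ren]
        exact ren_ext (fun m => by omega) N
      · have h1 : ¬ n < k := by omega
        have h2 : ¬ n = k := by omega
        have h3 : ¬ n + 1 < k + 1 := by omega
        have h4 : ¬ n + 1 = k + 1 := by omega
        simp only [substF, if_neg h1, if_neg h2, if_neg h3, if_neg h4, ren]
        congr 1
        omega

theorem subst_lam (k : ℕ) (N M : TT) : subst k N (lam M) = lam (subst (k+1) N M) := by
  simp only [subst, sub]
  exact congrArg lam (sub_ext (exts_substF k N) M)

theorem extr_liftF (c : ℕ) : ∀ n, extr (liftF c) n = liftF (c+1) n := by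
  intro n
  cases n with
  | zero => simp [extr, liftF]
  | succ n =>
      have e : extr (liftF c) (n+1) = liftF c n + 1 := rfl
      rw [e]
      simp only [liftF]; split_ifs <;> omega

theorem lift_lam (c : ℕ) (M : TT) : lift c (lam M) = lam (lift (c+1) M) := by
  simp only [lift, ren]
  exact congrArg lam (ren_ext (extr_liftF c) M)

theorem lift_lift {i j : ℕ} (h : i ≤ j) (t : TT) :
    lift i (lift j t) = lift (j+1) (lift i t) := by
  simp only [lift, ren_ren]
  exact ren_ext (fun n => by simp only [liftF]; split_ifs <;> omega) t

theorem lift_subst {i j : ℕ} (h : i ≤ j) (N : TT) (t : TT) :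
    lift i (subst j N t) = subst (j+1) N (lift i t) := by
  simp only [lift, subst, ren_sub, sub_ren]
  refine sub_ext (fun n => ?_) t
  rcases lt_trichotomy n j with hn | hn | hn
  · have h1 : liftF i n < j + 1 := by simp only [liftF]; split_ifs <;> omega
    simp only [substF, if_pos hn, if_pos h1, ren]
  · subst hn
    rw [substF_self, liftF_ge h, substF_self, ren_ren]
    exact ren_ext (fun m => by rw [liftF_ge (by omega)]; omega) N
  · have h1 : liftF i n = n + 1 := liftF_ge (by omega)
    have h2 : ¬ n < j := by omega
    have h3 : ¬ n = j := by omega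
    have h4 : ¬ n + 1 < j + 1 := by omega
    have h5 : ¬ n + 1 = j + 1 := by omega
    simp only [substF, if_neg h2, if_neg h3, h1, if_neg h4, if_neg h5, ren]
    congr 1
    rw [liftF_ge (by omega)]
    omega

theorem subst_lift_self (k : ℕ) (N t : TT) : subst k N (lift k t) = t := by
  simp only [lift, subst, sub_ren]
  rw [sub_ext (ρ' := var) (fun n => ?_) t, sub_id]
  by_cases h : n < k
  · rw [liftF_lt h]; simp only [substF, if_pos h]
  · rw [liftF_ge (by omega)]
    have h2 : ¬ n + 1 < k := by omega
    have h3 : ¬ n + 1 = k := by omega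
    simp only [substF, if_neg h2, if_neg h3]
    congr 1

theorem subst_subst0 (k : ℕ) (N P t : TT) :
    subst k N (subst 0 P t) = subst 0 (subst k N P) (subst (k+1) N t) := by
  simp only [subst, sub_sub]
  refine sub_ext (fun n => ?_) t
  cases n with
  | zero =>
      rw [substF_zero_zero]
      have h1 : substF (k+1) N 0 = var 0 := by simp [substF]
      rw [h1]
      have h2 : TT.sub (substF 0 (sub (substF k N) P)) (var 0) = substF 0 (sub (substF k N) P) 0 := rfl
      rw [h2, substF_zero_zero]
  | succ n =>
      have e1 : substF 0 P (n+1) = var n := by simp [substF]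
      rw [e1]
      rcases lt_trichotomy n k with hn | hn | hn
      · have h1 : n + 1 < k + 1 := by omega
        simp only [substF, if_pos hn, if_pos h1, sub]
        simp only [if_neg (by omega : ¬ n+1 < 0), if_neg (by omega : ¬ (n+1 = 0))]
        rfl
      · subst hn
        have e2 : TT.sub (substF n N) (var n) = substF n N n := rfl
        rw [e2, substF_self]
        have e3 : substF (n+1) N (n+1) = ren (· + (n+1)) N := substF_self _ _
        rw [e3, sub_ren, ren_eq_sub]
        refine sub_ext (fun m => ?_) N
        have h2 : ¬ m + (n+1) < 0 := by omega
        have h3 : ¬ m + (n+1) = 0 := by omega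
        simp only [substF, if_neg h2, if_neg h3]
        congr 1
      · have h1 : ¬ n < k := by omega
        have h2 : ¬ n = k := by omega
        have h3 : ¬ n + 1 < k + 1 := by omega
        have h4 : ¬ n + 1 = k + 1 := by omega
        have e2 : TT.sub (substF k N) (var n) = substF k N n := rfl
        rw [e2]
        have ha : substF k N n = var (n-1) := by
          simp only [substF]; split_ifs <;> first | omega | rfl
        have hb : substF (k+1) N (n+1) = var n := by
          simp only [substF]; split_ifs <;> first | omega | rfl
        rw [ha, hb]
        have e3 : TT.sub (substF 0 (sub (substF k N) P)) (var n)
            = substF 0 (sub (substF k N) P) n := rfl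
        rw [e3]
        simp only [substF]; split_ifs <;> first | omega | rfl

theorem lift_subst0 (c : ℕ) (N t : TT) :
    lift c (subst 0 N t) = subst 0 (lift c N) (lift (c+1) t) := by
  simp only [lift, subst, ren_sub, sub_ren]
  refine sub_ext (fun n => ?_) t
  cases n with
  | zero =>
      rw [substF_zero_zero]
      rw [liftF_lt (by omega : (0:ℕ) < c + 1), substF_zero_zero]
  | succ n =>
      have e1 : substF 0 N (n+1) = var n := by simp [substF]
      rw [e1]
      by_cases h : n + 1 < c + 1
      · rw [liftF_lt h]
        have e2 : substF 0 (ren (liftF c) N) (n+1) = var n := by simp [substF]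
        rw [e2, ren, liftF_lt (by omega : n < c)]
      · rw [liftF_ge (by omega)]
        have e2 : substF 0 (ren (liftF c) N) (n+1+1) = var (n+1) := by simp [substF]
        rw [e2, ren, liftF_ge (by omega)]

theorem ren_subst0 (ξ : ℕ → ℕ) (N M : TT) :
    ren ξ (subst 0 N M) = subst 0 (ren ξ N) (ren (extr ξ) M) := by
  simp only [subst, ren_sub, sub_ren]
  refine sub_ext (fun n => ?_) M
  cases n with
  | zero =>
      rw [substF_zero_zero]
      have e : extr ξ 0 = 0 := rfl
      rw [e, substF_zero_zero]
  | succ n =>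
      have e1 : substF 0 N (n+1) = var n := by simp [substF]
      rw [e1]
      have e2 : extr ξ (n+1) = ξ n + 1 := rfl
      rw [e2]
      have e3 : substF 0 (ren ξ N) (ξ n + 1) = var (ξ n) := by simp [substF]
      rw [ren, e3]

theorem sub_subst0 (ρ : ℕ → TT) (N M : TT) :
    sub ρ (subst 0 N M) = subst 0 (sub ρ N) (sub (exts ρ) M) := by
  simp only [subst, sub_sub]
  refine sub_ext (fun n => ?_) M
  cases n with
  | zero =>
      rw [substF_zero_zero]
      have e : exts ρ 0 = var 0 := rfl
      rw [e]
      have e2 : TT.sub (substF 0 (sub ρ N)) (var 0) = substF 0 (sub ρ N) 0 := rfl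
      rw [e2, substF_zero_zero]
  | succ n =>
      have e1 : substF 0 N (n+1) = var n := by simp [substF]
      have e2 : exts ρ (n+1) = ren Nat.succ (ρ n) := rfl
      rw [e1, e2, sub_ren]
      have e3 : TT.sub ρ (var n) = ρ n := rfl
      rw [e3]
      rw [sub_ext (ρ' := var) (fun m => by simp [substF]) (ρ n), sub_id]

def scons (N : TT) (ρ : ℕ → TT) : ℕ → TT
| 0 => N
| n+1 => ρ n

theorem subst0_sub_exts (N : TT) (ρ : ℕ → TT) (M : TT) :
    subst 0 N (sub (exts ρ) M) = sub (scons N ρ) M := by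
  simp only [subst, sub_sub]
  refine sub_ext (fun n => ?_) M
  cases n with
  | zero =>
      have e : exts ρ 0 = var 0 := rfl
      rw [e]
      have e2 : TT.sub (substF 0 N) (var 0) = substF 0 N 0 := rfl
      rw [e2, substF_zero_zero]
      rfl
  | succ n =>
      have e2 : exts ρ (n+1) = ren Nat.succ (ρ n) := rfl
      rw [e2, sub_ren]
      rw [sub_ext (ρ' := var) (fun m => by simp [substF]) (ρ n), sub_id]
      rfl


theorem lift_zero_iter (k : ℕ) (N : TT) : (lift 0)^[k] N = ren (· + k) N := by
  induction k with
  | zero => exact (ren_plus_zero N).symm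
  | succ k ih =>
      rw [Function.iterate_succ_apply', ih]
      simp only [lift, ren_ren]
      exact ren_ext (fun m => by rw [liftF_ge (by omega)]; omega) N

/-- One-step reduction of the target calculus. -/
inductive R : TT → TT → Prop
| beta {M N} : R (app (lam M) N) (subst 0 N M)
| fstPair {M N} : R (fst (pair M N)) M
| sndPair {M N} : R (snd (pair M N)) N
| caseL {M N P} : R (app (pair M N) (inl P)) (app M P)
| caseR {M N P} : R (app (pair M N) (inr P)) (app N P)
| lamC {M M'} : R M M' → R (lam M) (lam M')
| appL {M M' N} : R M M' → R (app M N) (app M' N)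
| appR {M N N'} : R N N' → R (app M N) (app M N')
| pairL {M M' N} : R M M' → R (pair M N) (pair M' N)
| pairR {M N N'} : R N N' → R (pair M N) (pair M N')
| fstC {M M'} : R M M' → R (fst M) (fst M')
| sndC {M M'} : R M M' → R (snd M) (snd M')
| inlC {M M'} : R M M' → R (inl M) (inl M')
| inrC {M M'} : R M M' → R (inr M) (inr M')

/-- Strong normalization in the target calculus. -/
def SN (M : TT) : Prop := Acc (fun a b => R b a) M

theorem R.ren {M M' : TT} (h : R M M') (ξ : ℕ → ℕ) : R (ren ξ M) (ren ξ M') := by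
  induction h generalizing ξ with
  | @beta M N => rw [ren_subst0]; exact R.beta
  | fstPair => exact R.fstPair
  | sndPair => exact R.sndPair
  | caseL => exact R.caseL
  | caseR => exact R.caseR
  | lamC _ ih => exact R.lamC (ih _)
  | appL _ ih => exact R.appL (ih _)
  | appR _ ih => exact R.appR (ih _)
  | pairL _ ih => exact R.pairL (ih _)
  | pairR _ ih => exact R.pairR (ih _)
  | fstC _ ih => exact R.fstC (ih _)
  | sndC _ ih => exact R.sndC (ih _)
  | inlC _ ih => exact R.inlC (ih _)
  | inrC _ ih => exact R.inrC (ih _)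

theorem R.sub {M M' : TT} (h : R M M') (ρ : ℕ → TT) : R (sub ρ M) (sub ρ M') := by
  induction h generalizing ρ with
  | @beta M N => rw [sub_subst0]; exact R.beta
  | fstPair => exact R.fstPair
  | sndPair => exact R.sndPair
  | caseL => exact R.caseL
  | caseR => exact R.caseR
  | lamC _ ih => exact R.lamC (ih _)
  | appL _ ih => exact R.appL (ih _)
  | appR _ ih => exact R.appR (ih _)
  | pairL _ ih => exact R.pairL (ih _)
  | pairR _ ih => exact R.pairR (ih _)
  | fstC _ ih => exact R.fstC (ih _)
  | sndC _ ih => exact R.sndC (ih _)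
  | inlC _ ih => exact R.inlC (ih _)
  | inrC _ ih => exact R.inrC (ih _)

theorem R.liftc {M M' : TT} (h : R M M') (c : ℕ) : R (lift c M) (lift c M') := h.ren _

theorem R.substc {M M' : TT} (h : R M M') (k : ℕ) (N : TT) :
    R (subst k N M) (subst k N M') := h.sub _

theorem SN.of_step {M M' : TT} (h : SN M) (hs : R M M') : SN M' := h.inv hs

theorem sn_pullback (f : TT → TT) (hf : ∀ {a b : TT}, R a b → R (f a) (f b)) :
    ∀ M, SN (f M) → SN M := by
  have key : ∀ x, SN x → ∀ M, x = f M → SN M := by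
    intro x hx
    induction hx with
    | intro x _ ih =>
        rintro M rfl
        constructor
        intro y hy
        exact ih (f y) (hf hy) y rfl
  intro M h
  exact key _ h M rfl

theorem SN.of_subst {M : TT} {N : TT} (h : SN (subst 0 N M)) : SN M :=
  sn_pullback (subst 0 N) (fun hr => hr.substc 0 N) M h

theorem SN.lam {M : TT} (h : SN M) : SN (TT.lam M) := by
  induction h with
  | intro M _ ih =>
      constructor
      intro y hy
      cases hy with
      | lamC h' => exact ih _ h'

theorem SN.pair {M N : TT} (hM : SN M) (hN : SN N) : SN (TT.pair M N) := by
  induction hM generalizing N with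
  | intro M _ ihM =>
      induction hN with
      | intro N hN ihN =>
          constructor
          intro y hy
          cases hy with
          | pairL h' => exact ihM _ h' (Acc.intro N hN)
          | pairR h' => exact ihN _ h'

theorem SN.inl {M : TT} (h : SN M) : SN (TT.inl M) := by
  induction h with
  | intro M _ ih =>
      constructor
      intro y hy
      cases hy with
      | inlC h' => exact ih _ h'

theorem SN.inr {M : TT} (h : SN M) : SN (TT.inr M) := by
  induction h with
  | intro M _ ih =>
      constructor
      intro y hy
      cases hy with
      | inrC h' => exact ih _ h'

end TT

open TT in
/-- Typing in the target calculus. -/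
inductive TY : List ST → TT → ST → Prop
| var {Γ n A} : Γ[n]? = some A → TY Γ (TT.var n) A
| cst {Γ k A} : TY Γ (TT.cst k) A
| lam {Γ M A B} : TY (A :: Γ) M B → TY Γ (TT.lam M) (ST.arr A B)
| app {Γ M N A B} : TY Γ M (ST.arr A B) → TY Γ N A → TY Γ (TT.app M N) B
| pairP {Γ M N A B} : TY Γ M A → TY Γ N B → TY Γ (TT.pair M N) (ST.prod A B)
| pairS {Γ M N A B C} : TY Γ M (ST.arr A C) → TY Γ N (ST.arr B C) →
    TY Γ (TT.pair M N) (ST.arr (ST.sum A B) C)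
| fst {Γ M A B} : TY Γ M (ST.prod A B) → TY Γ (TT.fst M) A
| snd {Γ M A B} : TY Γ M (ST.prod A B) → TY Γ (TT.snd M) B
| inl {Γ M A B} : TY Γ M A → TY Γ (TT.inl M) (ST.sum A B)
| inr {Γ M A B} : TY Γ M B → TY Γ (TT.inr M) (ST.sum A B)

theorem TY.ren {Γ M A} (h : TY Γ M A) :
    ∀ (Γ' : List ST) (ξ : ℕ → ℕ),
      (∀ n B, Γ[n]? = some B → Γ'[ξ n]? = some B) → TY Γ' (TT.ren ξ M) A := by
  induction h with
  | var hget => intro Γ' ξ hξ; exact TY.var (hξ _ _ hget)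
  | cst => intro Γ' ξ hξ; exact TY.cst
  | lam _ ih =>
      intro Γ' ξ hξ
      refine TY.lam (ih _ (TT.extr ξ) ?_)
      intro n B hB
      cases n with
      | zero => exact hB
      | succ n => exact hξ n B hB
  | app _ _ ih1 ih2 => intro Γ' ξ hξ; exact TY.app (ih1 _ _ hξ) (ih2 _ _ hξ)
  | pairP _ _ ih1 ih2 => intro Γ' ξ hξ; exact TY.pairP (ih1 _ _ hξ) (ih2 _ _ hξ)
  | pairS _ _ ih1 ih2 => intro Γ' ξ hξ; exact TY.pairS (ih1 _ _ hξ) (ih2 _ _ hξ)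
  | fst _ ih => intro Γ' ξ hξ; exact TY.fst (ih _ _ hξ)
  | snd _ ih => intro Γ' ξ hξ; exact TY.snd (ih _ _ hξ)
  | inl _ ih => intro Γ' ξ hξ; exact TY.inl (ih _ _ hξ)
  | inr _ ih => intro Γ' ξ hξ; exact TY.inr (ih _ _ hξ)

theorem TY.weak0 {Γ M A} (B : ST) (h : TY Γ M A) : TY (B :: Γ) (TT.lift 0 M) A := by
  refine h.ren _ _ ?_
  intro n C hC
  simpa [TT.liftF] using hC

theorem TY.weak1 {Γ M A C} (B : ST) (h : TY (C :: Γ) M A) :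
    TY (C :: B :: Γ) (TT.lift 1 M) A := by
  refine h.ren _ _ ?_
  intro n D hD
  cases n with
  | zero => simpa [TT.liftF] using hD
  | succ n => simpa [TT.liftF] using hD

theorem ty_pair_inv {Γ M N A} (h : TY Γ (TT.pair M N) A) :
    (∃ B, TY Γ M B) ∧ (∃ B, TY Γ N B) := by
  cases h with
  | pairP h1 h2 => exact ⟨⟨_, h1⟩, ⟨_, h2⟩⟩
  | pairS h1 h2 => exact ⟨⟨_, h1⟩, ⟨_, h2⟩⟩


namespace TT

abbrev RS : TT → TT → Prop := Relation.ReflTransGen R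

def Neutral : TT → Prop
| lam _ => False
| pair _ _ => False
| inl _ => False
| inr _ => False
| _ => True

/-- Reducibility candidates. -/
def Red : ST → TT → Prop
| ST.top, M => SN M
| ST.arr A B, M => SN M ∧ ∀ N, Red A N → Red B (app M N)
| ST.prod A B, M => SN M ∧ Red A (fst M) ∧ Red B (snd M)
| ST.sum A B, M => SN M ∧ (∀ N, RS M (inl N) → Red A N) ∧ (∀ N, RS M (inr N) → Red B N)

theorem cr : ∀ A : ST,
    (∀ M, Red A M → SN M) ∧
    (∀ M M', Red A M → R M M' → Red A M') ∧
    (∀ M, Neutral M → (∀ M', R M M' → Red A M') → Red A M) := by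
  intro A
  induction A with
  | top =>
      refine ⟨fun M h => h, fun M M' h hs => h.of_step hs, fun M _ h => ?_⟩
      exact Acc.intro _ (fun y hy => h y hy)
  | arr A B ihA ihB =>
      obtain ⟨cr1A, cr2A, _⟩ := ihA
      obtain ⟨_, cr2B, cr3B⟩ := ihB
      refine ⟨fun M h => h.1, ?_, ?_⟩
      · rintro M M' ⟨hsn, h⟩ hs
        exact ⟨hsn.of_step hs, fun N hN => cr2B _ _ (h N hN) (R.appL hs)⟩
      · intro M hneu h
        have hsn : SN M := Acc.intro _ (fun y hy => (h y hy).1)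
        have key : ∀ N, SN N → Red A N → Red B (app M N) := by
          intro N hsnN
          induction hsnN with
          | intro N _ ihN =>
              intro hN
              refine cr3B _ trivial ?_
              intro P hP
              cases hP with
              | appL hs => exact (h _ hs).2 N hN
              | appR hs => exact ihN _ hs (cr2A _ _ hN hs)
              | beta => simp [Neutral] at hneu
              | caseL => simp [Neutral] at hneu
              | caseR => simp [Neutral] at hneu
        exact ⟨hsn, fun N hN => key N (cr1A N hN) hN⟩
  | prod A B ihA ihB =>
      obtain ⟨_, cr2A, cr3A⟩ := ihA
      obtain ⟨_, cr2B, cr3B⟩ := ihB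
      refine ⟨fun M h => h.1, ?_, ?_⟩
      · rintro M M' ⟨hsn, h1, h2⟩ hs
        exact ⟨hsn.of_step hs, cr2A _ _ h1 (R.fstC hs), cr2B _ _ h2 (R.sndC hs)⟩
      · intro M hneu h
        have hsn : SN M := Acc.intro _ (fun y hy => (h y hy).1)
        refine ⟨hsn, cr3A _ trivial ?_, cr3B _ trivial ?_⟩
        · intro P hP
          cases hP with
          | fstPair => simp [Neutral] at hneu
          | fstC hs => exact (h _ hs).2.1
        · intro P hP
          cases hP with
          | sndPair => simp [Neutral] at hneu
          | sndC hs => exact (h _ hs).2.2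
  | sum A B ihA ihB =>
      refine ⟨fun M h => h.1, ?_, ?_⟩
      · rintro M M' ⟨hsn, h1, h2⟩ hs
        exact ⟨hsn.of_step hs, fun N hN => h1 N (Relation.ReflTransGen.head hs hN),
          fun N hN => h2 N (Relation.ReflTransGen.head hs hN)⟩
      · intro M hneu h
        have hsn : SN M := Acc.intro _ (fun y hy => (h y hy).1)
        refine ⟨hsn, ?_, ?_⟩
        · intro N hN
          rcases (Relation.ReflTransGen.cases_head hN) with heq | ⟨M₁, hstep, hrest⟩
          · rw [heq] at hneu; simp [Neutral] at hneu
          · exact (h _ hstep).2.1 N hrest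
        · intro N hN
          rcases (Relation.ReflTransGen.cases_head hN) with heq | ⟨M₁, hstep, hrest⟩
          · rw [heq] at hneu; simp [Neutral] at hneu
          · exact (h _ hstep).2.2 N hrest

theorem red_sn {A M} (h : Red A M) : SN M := (cr A).1 M h

theorem red_step {A M M'} (h : Red A M) (hs : R M M') : Red A M' := (cr A).2.1 M M' h hs

theorem red_cr3 {A M} (hneu : Neutral M) (h : ∀ M', R M M' → Red A M') : Red A M :=
  (cr A).2.2 M hneu h

theorem red_var (A : ST) (n : ℕ) : Red A (var n) :=
  red_cr3 trivial (fun M' h => by cases h)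

theorem red_cst (A : ST) (k : ℕ) : Red A (cst k) :=
  red_cr3 trivial (fun M' h => by cases h)

theorem red_rs {A M M'} (h : Red A M) (hs : RS M M') : Red A M' := by
  induction hs with
  | refl => exact h
  | tail _ hstep ih => exact red_step ih hstep

theorem red_abs {A B M} (h : ∀ N, Red A N → Red B (subst 0 N M)) :
    Red (ST.arr A B) (lam M) := by
  have hsnM : SN M := SN.of_subst (red_sn (h (var 0) (red_var _ _)))
  have key : ∀ M₁, SN M₁ → ∀ N, SN N →
      (∀ P, Red A P → Red B (subst 0 P M₁)) → Red A N → Red B (app (lam M₁) N) := by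
    intro M₁ hM₁
    induction hM₁ with
    | intro M₁ hM₁acc ihM =>
        intro N hN
        induction hN with
        | intro N hNacc ihN =>
            intro hsub hN'
            refine red_cr3 trivial ?_
            intro P hP
            cases hP with
            | beta => exact hsub N hN'
            | appL hs =>
                cases hs with
                | lamC hs' =>
                    exact ihM _ hs' N (Acc.intro N hNacc)
                      (fun P hP => red_step (hsub P hP) (hs'.substc 0 P)) hN'
            | appR hs => exact ihN _ hs hsub (red_step hN' hs)
  exact ⟨hsnM.lam, fun N hN => key M hsnM N (red_sn hN) h hN⟩

theorem red_pairP {A B M N} (hM : Red A M) (hN : Red B N) :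
    Red (ST.prod A B) (pair M N) := by
  have key₁ : ∀ M, SN M → ∀ N, SN N → Red A M → Red A (fst (pair M N)) := by
    intro M hM
    induction hM with
    | intro M hMacc ihM =>
        intro N hN
        induction hN with
        | intro N hNacc ihN =>
            intro hM'
            refine red_cr3 trivial ?_
            intro P hP
            cases hP with
            | fstPair => exact hM'
            | fstC hs =>
                cases hs with
                | pairL hs' => exact ihM _ hs' N (Acc.intro N hNacc) (red_step hM' hs')
                | pairR hs' => exact ihN _ hs' hM'
  have key₂ : ∀ N, SN N → ∀ M, SN M → Red B N → Red B (snd (pair M N)) := by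
    intro N hN
    induction hN with
    | intro N hNacc ihN =>
        intro M hM
        induction hM with
        | intro M hMacc ihM =>
            intro hN'
            refine red_cr3 trivial ?_
            intro P hP
            cases hP with
            | sndPair => exact hN'
            | sndC hs =>
                cases hs with
                | pairL hs' => exact ihM _ hs' hN'
                | pairR hs' => exact ihN _ hs' M (Acc.intro M hMacc) (red_step hN' hs')
  exact ⟨(red_sn hM).pair (red_sn hN),
    key₁ M (red_sn hM) N (red_sn hN) hM, key₂ N (red_sn hN) M (red_sn hM) hN⟩

theorem red_pairS {A B C M N} (hM : Red (ST.arr A C) M) (hN : Red (ST.arr B C) N) :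
    Red (ST.arr (ST.sum A B) C) (pair M N) := by
  have key : ∀ M, SN M → ∀ N, SN N → ∀ P, SN P →
      Red (ST.arr A C) M → Red (ST.arr B C) N → Red (ST.sum A B) P →
      Red C (app (pair M N) P) := by
    intro M hM
    induction hM with
    | intro M hMacc ihM =>
        intro N hN
        induction hN with
        | intro N hNacc ihN =>
            intro P hP
            induction hP with
            | intro P hPacc ihP =>
                intro h1 h2 h3
                refine red_cr3 trivial ?_
                intro Q hQ
                cases hQ with
                | caseL => exact h1.2 _ (h3.2.1 _ Relation.ReflTransGen.refl)
                | caseR => exact h2.2 _ (h3.2.2 _ Relation.ReflTransGen.refl)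
                | appL hs =>
                    cases hs with
                    | pairL hs' =>
                        exact ihM _ hs' N (Acc.intro N hNacc) P (Acc.intro P hPacc)
                          (red_step h1 hs') h2 h3
                    | pairR hs' =>
                        exact ihN _ hs' P (Acc.intro P hPacc) h1 (red_step h2 hs') h3
                | appR hs => exact ihP _ hs h1 h2 (red_step h3 hs)
  refine ⟨(red_sn hM).pair (red_sn hN), fun P hP => ?_⟩
  exact key M (red_sn hM) N (red_sn hN) P (red_sn hP) hM hN hP

theorem rs_inl_inv {M Q} (h : RS (inl M) Q) : ∃ M', Q = inl M' ∧ RS M M' := by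
  induction h with
  | refl => exact ⟨M, rfl, Relation.ReflTransGen.refl⟩
  | tail hab hbc ih =>
      obtain ⟨M', rfl, hMM'⟩ := ih
      cases hbc with
      | inlC hs => exact ⟨_, rfl, hMM'.tail hs⟩

theorem rs_inr_inv {M Q} (h : RS (inr M) Q) : ∃ M', Q = inr M' ∧ RS M M' := by
  induction h with
  | refl => exact ⟨M, rfl, Relation.ReflTransGen.refl⟩
  | tail hab hbc ih =>
      obtain ⟨M', rfl, hMM'⟩ := ih
      cases hbc with
      | inrC hs => exact ⟨_, rfl, hMM'.tail hs⟩

theorem red_inl {A B M} (h : Red A M) : Red (ST.sum A B) (inl M) := by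
  refine ⟨(red_sn h).inl, ?_, ?_⟩
  · intro N hN
    obtain ⟨M', hEq, hMM'⟩ := rs_inl_inv hN
    injection hEq with hEq'
    subst hEq'
    exact red_rs h hMM'
  · intro N hN
    obtain ⟨M', hEq, _⟩ := rs_inl_inv hN
    exact TT.noConfusion hEq

theorem red_inr {A B M} (h : Red B M) : Red (ST.sum A B) (inr M) := by
  refine ⟨(red_sn h).inr, ?_, ?_⟩
  · intro N hN
    obtain ⟨M', hEq, _⟩ := rs_inr_inv hN
    exact TT.noConfusion hEq
  · intro N hN
    obtain ⟨M', hEq, hMM'⟩ := rs_inr_inv hN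
    injection hEq with hEq'
    subst hEq'
    exact red_rs h hMM'

end TT

open TT in
theorem TY.fundamental {Γ M A} (h : TY Γ M A) :
    ∀ ρ, (∀ n B, Γ[n]? = some B → Red B (ρ n)) → Red A (TT.sub ρ M) := by
  induction h with
  | var hget => intro ρ hρ; exact hρ _ _ hget
  | cst => intro ρ hρ; exact red_cst _ _
  | @lam Γ M A B hbody ih =>
      intro ρ hρ
      show Red _ (TT.lam (TT.sub (exts ρ) M))
      refine red_abs (fun N hN => ?_)
      rw [subst0_sub_exts]
      refine ih (scons N ρ) ?_
      intro n C hget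
      cases n with
      | zero =>
          simp only [List.getElem?_cons_zero] at hget
          injection hget with hget'
          subst hget'
          exact hN
      | succ n => exact hρ n C hget
  | app h1 h2 ih1 ih2 => intro ρ hρ; exact (ih1 ρ hρ).2 _ (ih2 ρ hρ)
  | pairP h1 h2 ih1 ih2 => intro ρ hρ; exact red_pairP (ih1 ρ hρ) (ih2 ρ hρ)
  | pairS h1 h2 ih1 ih2 => intro ρ hρ; exact red_pairS (ih1 ρ hρ) (ih2 ρ hρ)
  | fst h ih => intro ρ hρ; exact (ih ρ hρ).2.1
  | snd h ih => intro ρ hρ; exact (ih ρ hρ).2.2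
  | inl h ih => intro ρ hρ; exact red_inl (ih ρ hρ)
  | inr h ih => intro ρ hρ; exact red_inr (ih ρ hρ)

/-- Typable target terms are strongly normalizing. -/
theorem TY.sn {Γ M A} (h : TY Γ M A) : TT.SN M := by
  have := h.fundamental TT.var (fun n B _ => TT.red_var B n)
  rw [TT.sub_id] at this
  exact TT.red_sn this



namespace Tm

def renT (ξ : ℕ → ℕ) : Tm → Tm
| .type => .type
| .pi σ τ => .pi (renT ξ σ) (renT (TT.extr ξ) τ)
| .rarr σ τ => .rarr (renT ξ σ) (renT ξ τ)
| .inter σ τ => .inter (renT ξ σ) (renT ξ τ)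
| .union σ τ => .union (renT ξ σ) (renT ξ τ)
| .const c => .const c
| .var n => .var (ξ n)
| .lam σ Δ => .lam (renT ξ σ) (renT (TT.extr ξ) Δ)
| .app a b => .app (renT ξ a) (renT ξ b)
| .rlam σ Δ => .rlam (renT ξ σ) (renT (TT.extr ξ) Δ)
| .rapp a b => .rapp (renT ξ a) (renT ξ b)
| .pair a b => .pair (renT ξ a) (renT ξ b)
| .copair a b => .copair (renT ξ a) (renT ξ b)
| .prl a => .prl (renT ξ a)
| .prr a => .prr (renT ξ a)
| .inl σ a => .inl (renT ξ σ) (renT ξ a)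
| .inr σ a => .inr (renT ξ σ) (renT ξ a)

def extsT (ρ : ℕ → Tm) : ℕ → Tm
| 0 => .var 0
| n+1 => renT Nat.succ (ρ n)

def subT (ρ : ℕ → Tm) : Tm → Tm
| .type => .type
| .pi σ τ => .pi (subT ρ σ) (subT (extsT ρ) τ)
| .rarr σ τ => .rarr (subT ρ σ) (subT ρ τ)
| .inter σ τ => .inter (subT ρ σ) (subT ρ τ)
| .union σ τ => .union (subT ρ σ) (subT ρ τ)
| .const c => .const c
| .var n => ρ n
| .lam σ Δ => .lam (subT ρ σ) (subT (extsT ρ) Δ)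
| .app a b => .app (subT ρ a) (subT ρ b)
| .rlam σ Δ => .rlam (subT ρ σ) (subT (extsT ρ) Δ)
| .rapp a b => .rapp (subT ρ a) (subT ρ b)
| .pair a b => .pair (subT ρ a) (subT ρ b)
| .copair a b => .copair (subT ρ a) (subT ρ b)
| .prl a => .prl (subT ρ a)
| .prr a => .prr (subT ρ a)
| .inl σ a => .inl (subT ρ σ) (subT ρ a)
| .inr σ a => .inr (subT ρ σ) (subT ρ a)

theorem renT_ext {ξ ζ : ℕ → ℕ} (h : ∀ n, ξ n = ζ n) : ∀ t, renT ξ t = renT ζ t := by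
  intro t
  induction t generalizing ξ ζ with
  | type => rfl
  | pi σ τ ih1 ih2 =>
      simp only [renT]; exact congrArg₂ _ (ih1 h) (ih2 (fun n => by cases n <;> simp [TT.extr, h]))
  | rarr σ τ ih1 ih2 =>
      simp only [renT]; exact congrArg₂ _ (ih1 h) (ih2 h)
  | inter σ τ ih1 ih2 =>
      simp only [renT]; exact congrArg₂ _ (ih1 h) (ih2 h)
  | union σ τ ih1 ih2 =>
      simp only [renT]; exact congrArg₂ _ (ih1 h) (ih2 h)
  | const c => rfl
  | var n => simp [renT, h]
  | lam σ Δ ih1 ih2 =>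
      simp only [renT]; exact congrArg₂ _ (ih1 h) (ih2 (fun n => by cases n <;> simp [TT.extr, h]))
  | app a b ih1 ih2 =>
      simp only [renT]; exact congrArg₂ _ (ih1 h) (ih2 h)
  | rlam σ Δ ih1 ih2 =>
      simp only [renT]; exact congrArg₂ _ (ih1 h) (ih2 (fun n => by cases n <;> simp [TT.extr, h]))
  | rapp a b ih1 ih2 =>
      simp only [renT]; exact congrArg₂ _ (ih1 h) (ih2 h)
  | pair a b ih1 ih2 =>
      simp only [renT]; exact congrArg₂ _ (ih1 h) (ih2 h)
  | copair a b ih1 ih2 =>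
      simp only [renT]; exact congrArg₂ _ (ih1 h) (ih2 h)
  | prl a ih1 =>
      simp only [renT]; exact congrArg _ (ih1 h)
  | prr a ih1 =>
      simp only [renT]; exact congrArg _ (ih1 h)
  | inl σ a ih1 ih2 =>
      simp only [renT]; exact congrArg₂ _ (ih1 h) (ih2 h)
  | inr σ a ih1 ih2 =>
      simp only [renT]; exact congrArg₂ _ (ih1 h) (ih2 h)

theorem subT_ext {ρ ρ' : ℕ → Tm} (h : ∀ n, ρ n = ρ' n) : ∀ t, subT ρ t = subT ρ' t := by
  intro t
  induction t generalizing ρ ρ' with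
  | type => rfl
  | pi σ τ ih1 ih2 =>
      simp only [subT]; exact congrArg₂ _ (ih1 h) (ih2 (fun n => by cases n <;> simp [extsT, h]))
  | rarr σ τ ih1 ih2 =>
      simp only [subT]; exact congrArg₂ _ (ih1 h) (ih2 h)
  | inter σ τ ih1 ih2 =>
      simp only [subT]; exact congrArg₂ _ (ih1 h) (ih2 h)
  | union σ τ ih1 ih2 =>
      simp only [subT]; exact congrArg₂ _ (ih1 h) (ih2 h)
  | const c => rfl
  | var n => simp [subT, h]
  | lam σ Δ ih1 ih2 =>
      simp only [subT]; exact congrArg₂ _ (ih1 h) (ih2 (fun n => by cases n <;> simp [extsT, h]))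
  | app a b ih1 ih2 =>
      simp only [subT]; exact congrArg₂ _ (ih1 h) (ih2 h)
  | rlam σ Δ ih1 ih2 =>
      simp only [subT]; exact congrArg₂ _ (ih1 h) (ih2 (fun n => by cases n <;> simp [extsT, h]))
  | rapp a b ih1 ih2 =>
      simp only [subT]; exact congrArg₂ _ (ih1 h) (ih2 h)
  | pair a b ih1 ih2 =>
      simp only [subT]; exact congrArg₂ _ (ih1 h) (ih2 h)
  | copair a b ih1 ih2 =>
      simp only [subT]; exact congrArg₂ _ (ih1 h) (ih2 h)
  | prl a ih1 =>
      simp only [subT]; exact congrArg _ (ih1 h)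
  | prr a ih1 =>
      simp only [subT]; exact congrArg _ (ih1 h)
  | inl σ a ih1 ih2 =>
      simp only [subT]; exact congrArg₂ _ (ih1 h) (ih2 h)
  | inr σ a ih1 ih2 =>
      simp only [subT]; exact congrArg₂ _ (ih1 h) (ih2 h)

theorem renT_renT (ξ ζ : ℕ → ℕ) : ∀ t, renT ξ (renT ζ t) = renT (fun n => ξ (ζ n)) t := by
  intro t
  induction t generalizing ξ ζ with
  | type => rfl
  | pi σ τ ih1 ih2 =>
      simp only [renT]; exact congrArg₂ _ (ih1 _ _) ((ih2 _ _).trans (renT_ext (fun n => by cases n <;> simp [TT.extr]) _))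
  | rarr σ τ ih1 ih2 =>
      simp only [renT]; exact congrArg₂ _ (ih1 _ _) (ih2 _ _)
  | inter σ τ ih1 ih2 =>
      simp only [renT]; exact congrArg₂ _ (ih1 _ _) (ih2 _ _)
  | union σ τ ih1 ih2 =>
      simp only [renT]; exact congrArg₂ _ (ih1 _ _) (ih2 _ _)
  | const c => rfl
  | var n => rfl
  | lam σ Δ ih1 ih2 =>
      simp only [renT]; exact congrArg₂ _ (ih1 _ _) ((ih2 _ _).trans (renT_ext (fun n => by cases n <;> simp [TT.extr]) _))
  | app a b ih1 ih2 =>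
      simp only [renT]; exact congrArg₂ _ (ih1 _ _) (ih2 _ _)
  | rlam σ Δ ih1 ih2 =>
      simp only [renT]; exact congrArg₂ _ (ih1 _ _) ((ih2 _ _).trans (renT_ext (fun n => by cases n <;> simp [TT.extr]) _))
  | rapp a b ih1 ih2 =>
      simp only [renT]; exact congrArg₂ _ (ih1 _ _) (ih2 _ _)
  | pair a b ih1 ih2 =>
      simp only [renT]; exact congrArg₂ _ (ih1 _ _) (ih2 _ _)
  | copair a b ih1 ih2 =>
      simp only [renT]; exact congrArg₂ _ (ih1 _ _) (ih2 _ _)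
  | prl a ih1 =>
      simp only [renT]; exact congrArg _ (ih1 _ _)
  | prr a ih1 =>
      simp only [renT]; exact congrArg _ (ih1 _ _)
  | inl σ a ih1 ih2 =>
      simp only [renT]; exact congrArg₂ _ (ih1 _ _) (ih2 _ _)
  | inr σ a ih1 ih2 =>
      simp only [renT]; exact congrArg₂ _ (ih1 _ _) (ih2 _ _)

theorem subT_renT (ρ : ℕ → Tm) (ξ : ℕ → ℕ) : ∀ t, subT ρ (renT ξ t) = subT (fun n => ρ (ξ n)) t := by
  intro t
  induction t generalizing ρ ξ with
  | type => rfl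
  | pi σ τ ih1 ih2 =>
      simp only [renT, subT]; exact congrArg₂ _ (ih1 _ _) ((ih2 _ _).trans (subT_ext (fun n => by cases n <;> simp [TT.extr, extsT]) _))
  | rarr σ τ ih1 ih2 =>
      simp only [renT, subT]; exact congrArg₂ _ (ih1 _ _) (ih2 _ _)
  | inter σ τ ih1 ih2 =>
      simp only [renT, subT]; exact congrArg₂ _ (ih1 _ _) (ih2 _ _)
  | union σ τ ih1 ih2 =>
      simp only [renT, subT]; exact congrArg₂ _ (ih1 _ _) (ih2 _ _)
  | const c => rfl
  | var n => rfl
  | lam σ Δ ih1 ih2 =>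
      simp only [renT, subT]; exact congrArg₂ _ (ih1 _ _) ((ih2 _ _).trans (subT_ext (fun n => by cases n <;> simp [TT.extr, extsT]) _))
  | app a b ih1 ih2 =>
      simp only [renT, subT]; exact congrArg₂ _ (ih1 _ _) (ih2 _ _)
  | rlam σ Δ ih1 ih2 =>
      simp only [renT, subT]; exact congrArg₂ _ (ih1 _ _) ((ih2 _ _).trans (subT_ext (fun n => by cases n <;> simp [TT.extr, extsT]) _))
  | rapp a b ih1 ih2 =>
      simp only [renT, subT]; exact congrArg₂ _ (ih1 _ _) (ih2 _ _)
  | pair a b ih1 ih2 =>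
      simp only [renT, subT]; exact congrArg₂ _ (ih1 _ _) (ih2 _ _)
  | copair a b ih1 ih2 =>
      simp only [renT, subT]; exact congrArg₂ _ (ih1 _ _) (ih2 _ _)
  | prl a ih1 =>
      simp only [renT, subT]; exact congrArg _ (ih1 _ _)
  | prr a ih1 =>
      simp only [renT, subT]; exact congrArg _ (ih1 _ _)
  | inl σ a ih1 ih2 =>
      simp only [renT, subT]; exact congrArg₂ _ (ih1 _ _) (ih2 _ _)
  | inr σ a ih1 ih2 =>
      simp only [renT, subT]; exact congrArg₂ _ (ih1 _ _) (ih2 _ _)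

theorem renT_subT (ξ : ℕ → ℕ) (ρ : ℕ → Tm) : ∀ t, renT ξ (subT ρ t) = subT (fun n => renT ξ (ρ n)) t := by
  intro t
  induction t generalizing ρ ξ with
  | type => rfl
  | pi σ τ ih1 ih2 =>
      simp only [renT, subT]
      refine congrArg₂ _ (ih1 _ _) ((ih2 _ _).trans (subT_ext (fun n => ?_) _))
      cases n with
      | zero => simp [TT.extr, extsT, renT]
      | succ n => simp [TT.extr, extsT, renT_renT]
  | rarr σ τ ih1 ih2 =>
      simp only [renT, subT]; exact congrArg₂ _ (ih1 _ _) (ih2 _ _)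
  | inter σ τ ih1 ih2 =>
      simp only [renT, subT]; exact congrArg₂ _ (ih1 _ _) (ih2 _ _)
  | union σ τ ih1 ih2 =>
      simp only [renT, subT]; exact congrArg₂ _ (ih1 _ _) (ih2 _ _)
  | const c => rfl
  | var n => rfl
  | lam σ Δ ih1 ih2 =>
      simp only [renT, subT]
      refine congrArg₂ _ (ih1 _ _) ((ih2 _ _).trans (subT_ext (fun n => ?_) _))
      cases n with
      | zero => simp [TT.extr, extsT, renT]
      | succ n => simp [TT.extr, extsT, renT_renT]
  | app a b ih1 ih2 =>
      simp only [renT, subT]; exact congrArg₂ _ (ih1 _ _) (ih2 _ _)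
  | rlam σ Δ ih1 ih2 =>
      simp only [renT, subT]
      refine congrArg₂ _ (ih1 _ _) ((ih2 _ _).trans (subT_ext (fun n => ?_) _))
      cases n with
      | zero => simp [TT.extr, extsT, renT]
      | succ n => simp [TT.extr, extsT, renT_renT]
  | rapp a b ih1 ih2 =>
      simp only [renT, subT]; exact congrArg₂ _ (ih1 _ _) (ih2 _ _)
  | pair a b ih1 ih2 =>
      simp only [renT, subT]; exact congrArg₂ _ (ih1 _ _) (ih2 _ _)
  | copair a b ih1 ih2 =>
      simp only [renT, subT]; exact congrArg₂ _ (ih1 _ _) (ih2 _ _)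
  | prl a ih1 =>
      simp only [renT, subT]; exact congrArg _ (ih1 _ _)
  | prr a ih1 =>
      simp only [renT, subT]; exact congrArg _ (ih1 _ _)
  | inl σ a ih1 ih2 =>
      simp only [renT, subT]; exact congrArg₂ _ (ih1 _ _) (ih2 _ _)
  | inr σ a ih1 ih2 =>
      simp only [renT, subT]; exact congrArg₂ _ (ih1 _ _) (ih2 _ _)

theorem subT_subT (ρ ρ' : ℕ → Tm) : ∀ t, subT ρ (subT ρ' t) = subT (fun n => subT ρ (ρ' n)) t := by
  intro t
  induction t generalizing ρ ρ' with
  | type => rfl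
  | pi σ τ ih1 ih2 =>
      simp only [subT]
      refine congrArg₂ _ (ih1 _ _) ((ih2 _ _).trans (subT_ext (fun n => ?_) _))
      cases n with
      | zero => simp [extsT, subT]
      | succ n => simp [extsT, subT_renT, renT_subT]
  | rarr σ τ ih1 ih2 =>
      simp only [subT]; exact congrArg₂ _ (ih1 _ _) (ih2 _ _)
  | inter σ τ ih1 ih2 =>
      simp only [subT]; exact congrArg₂ _ (ih1 _ _) (ih2 _ _)
  | union σ τ ih1 ih2 =>
      simp only [subT]; exact congrArg₂ _ (ih1 _ _) (ih2 _ _)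
  | const c => rfl
  | var n => rfl
  | lam σ Δ ih1 ih2 =>
      simp only [subT]
      refine congrArg₂ _ (ih1 _ _) ((ih2 _ _).trans (subT_ext (fun n => ?_) _))
      cases n with
      | zero => simp [extsT, subT]
      | succ n => simp [extsT, subT_renT, renT_subT]
  | app a b ih1 ih2 =>
      simp only [subT]; exact congrArg₂ _ (ih1 _ _) (ih2 _ _)
  | rlam σ Δ ih1 ih2 =>
      simp only [subT]
      refine congrArg₂ _ (ih1 _ _) ((ih2 _ _).trans (subT_ext (fun n => ?_) _))
      cases n with
      | zero => simp [extsT, subT]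
      | succ n => simp [extsT, subT_renT, renT_subT]
  | rapp a b ih1 ih2 =>
      simp only [subT]; exact congrArg₂ _ (ih1 _ _) (ih2 _ _)
  | pair a b ih1 ih2 =>
      simp only [subT]; exact congrArg₂ _ (ih1 _ _) (ih2 _ _)
  | copair a b ih1 ih2 =>
      simp only [subT]; exact congrArg₂ _ (ih1 _ _) (ih2 _ _)
  | prl a ih1 =>
      simp only [subT]; exact congrArg _ (ih1 _ _)
  | prr a ih1 =>
      simp only [subT]; exact congrArg _ (ih1 _ _)
  | inl σ a ih1 ih2 =>
      simp only [subT]; exact congrArg₂ _ (ih1 _ _) (ih2 _ _)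
  | inr σ a ih1 ih2 =>
      simp only [subT]; exact congrArg₂ _ (ih1 _ _) (ih2 _ _)

theorem subT_id : ∀ t, subT Tm.var t = t := by
  intro t
  induction t with
  | type => rfl
  | pi σ τ ih1 ih2 =>
      simp only [subT]; exact congrArg₂ _ ih1 ((subT_ext (fun n => by cases n <;> simp [extsT, renT]) _).trans ih2)
  | rarr σ τ ih1 ih2 =>
      simp only [subT]; exact congrArg₂ _ ih1 ih2
  | inter σ τ ih1 ih2 =>
      simp only [subT]; exact congrArg₂ _ ih1 ih2
  | union σ τ ih1 ih2 =>
      simp only [subT]; exact congrArg₂ _ ih1 ih2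
  | const c => rfl
  | var n => rfl
  | lam σ Δ ih1 ih2 =>
      simp only [subT]; exact congrArg₂ _ ih1 ((subT_ext (fun n => by cases n <;> simp [extsT, renT]) _).trans ih2)
  | app a b ih1 ih2 =>
      simp only [subT]; exact congrArg₂ _ ih1 ih2
  | rlam σ Δ ih1 ih2 =>
      simp only [subT]; exact congrArg₂ _ ih1 ((subT_ext (fun n => by cases n <;> simp [extsT, renT]) _).trans ih2)
  | rapp a b ih1 ih2 =>
      simp only [subT]; exact congrArg₂ _ ih1 ih2
  | pair a b ih1 ih2 =>
      simp only [subT]; exact congrArg₂ _ ih1 ih2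
  | copair a b ih1 ih2 =>
      simp only [subT]; exact congrArg₂ _ ih1 ih2
  | prl a ih1 =>
      simp only [subT]; exact congrArg _ ih1
  | prr a ih1 =>
      simp only [subT]; exact congrArg _ ih1
  | inl σ a ih1 ih2 =>
      simp only [subT]; exact congrArg₂ _ ih1 ih2
  | inr σ a ih1 ih2 =>
      simp only [subT]; exact congrArg₂ _ ih1 ih2

theorem renT_eq_subT (ξ : ℕ → ℕ) : ∀ t, renT ξ t = subT (fun n => Tm.var (ξ n)) t := by
  intro t
  induction t generalizing ξ with
  | type => rfl
  | pi σ τ ih1 ih2 =>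
      simp only [renT, subT]; exact congrArg₂ _ (ih1 _) ((ih2 _).trans (subT_ext (fun n => by cases n <;> simp [TT.extr, extsT, renT]) _))
  | rarr σ τ ih1 ih2 =>
      simp only [renT, subT]; exact congrArg₂ _ (ih1 _) (ih2 _)
  | inter σ τ ih1 ih2 =>
      simp only [renT, subT]; exact congrArg₂ _ (ih1 _) (ih2 _)
  | union σ τ ih1 ih2 =>
      simp only [renT, subT]; exact congrArg₂ _ (ih1 _) (ih2 _)
  | const c => rfl
  | var n => rfl
  | lam σ Δ ih1 ih2 =>
      simp only [renT, subT]; exact congrArg₂ _ (ih1 _) ((ih2 _).trans (subT_ext (fun n => by cases n <;> simp [TT.extr, extsT, renT]) _))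
  | app a b ih1 ih2 =>
      simp only [renT, subT]; exact congrArg₂ _ (ih1 _) (ih2 _)
  | rlam σ Δ ih1 ih2 =>
      simp only [renT, subT]; exact congrArg₂ _ (ih1 _) ((ih2 _).trans (subT_ext (fun n => by cases n <;> simp [TT.extr, extsT, renT]) _))
  | rapp a b ih1 ih2 =>
      simp only [renT, subT]; exact congrArg₂ _ (ih1 _) (ih2 _)
  | pair a b ih1 ih2 =>
      simp only [renT, subT]; exact congrArg₂ _ (ih1 _) (ih2 _)
  | copair a b ih1 ih2 =>
      simp only [renT, subT]; exact congrArg₂ _ (ih1 _) (ih2 _)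
  | prl a ih1 =>
      simp only [renT, subT]; exact congrArg _ (ih1 _)
  | prr a ih1 =>
      simp only [renT, subT]; exact congrArg _ (ih1 _)
  | inl σ a ih1 ih2 =>
      simp only [renT, subT]; exact congrArg₂ _ (ih1 _) (ih2 _)
  | inr σ a ih1 ih2 =>
      simp only [renT, subT]; exact congrArg₂ _ (ih1 _) (ih2 _)

theorem renT_id : ∀ t, renT (fun n => n) t = t := by
  intro t
  rw [renT_eq_subT, subT_ext (ρ' := Tm.var) (fun n => rfl) t, subT_id]

theorem renT_plus_zero : ∀ t, renT (· + 0) t = t := by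
  intro t
  exact (renT_ext (ζ := fun n => n) (fun n => rfl) t).trans (renT_id t)

def substFT (k : ℕ) (N : Tm) (n : ℕ) : Tm :=
  if n < k then .var n else if n = k then renT (· + k) N else .var (n - 1)

theorem lift_eq_renT (c : ℕ) : ∀ t, Tm.lift c t = renT (TT.liftF c) t := by
  intro t
  induction t generalizing c with
  | type => rfl
  | pi σ τ ih1 ih2 =>
      simp only [Tm.lift, renT]; exact congrArg₂ _ (ih1 _) ((ih2 _).trans (renT_ext (fun n => (TT.extr_liftF c n).symm) _))
  | rarr σ τ ih1 ih2 =>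
      simp only [Tm.lift, renT]; exact congrArg₂ _ (ih1 _) (ih2 _)
  | inter σ τ ih1 ih2 =>
      simp only [Tm.lift, renT]; exact congrArg₂ _ (ih1 _) (ih2 _)
  | union σ τ ih1 ih2 =>
      simp only [Tm.lift, renT]; exact congrArg₂ _ (ih1 _) (ih2 _)
  | const c => rfl
  | var n => by_cases h : n < c <;> simp [Tm.lift, renT, TT.liftF, h]
  | lam σ Δ ih1 ih2 =>
      simp only [Tm.lift, renT]; exact congrArg₂ _ (ih1 _) ((ih2 _).trans (renT_ext (fun n => (TT.extr_liftF c n).symm) _))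
  | app a b ih1 ih2 =>
      simp only [Tm.lift, renT]; exact congrArg₂ _ (ih1 _) (ih2 _)
  | rlam σ Δ ih1 ih2 =>
      simp only [Tm.lift, renT]; exact congrArg₂ _ (ih1 _) ((ih2 _).trans (renT_ext (fun n => (TT.extr_liftF c n).symm) _))
  | rapp a b ih1 ih2 =>
      simp only [Tm.lift, renT]; exact congrArg₂ _ (ih1 _) (ih2 _)
  | pair a b ih1 ih2 =>
      simp only [Tm.lift, renT]; exact congrArg₂ _ (ih1 _) (ih2 _)
  | copair a b ih1 ih2 =>
      simp only [Tm.lift, renT]; exact congrArg₂ _ (ih1 _) (ih2 _)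
  | prl a ih1 =>
      simp only [Tm.lift, renT]; exact congrArg _ (ih1 _)
  | prr a ih1 =>
      simp only [Tm.lift, renT]; exact congrArg _ (ih1 _)
  | inl σ a ih1 ih2 =>
      simp only [Tm.lift, renT]; exact congrArg₂ _ (ih1 _) (ih2 _)
  | inr σ a ih1 ih2 =>
      simp only [Tm.lift, renT]; exact congrArg₂ _ (ih1 _) (ih2 _)

theorem iter_lift_renT (k : ℕ) (N : Tm) : (Tm.lift 0)^[k] N = renT (· + k) N := by
  induction k with
  | zero => exact (renT_plus_zero N).symm
  | succ k ih =>
      rw [Function.iterate_succ_apply', ih, lift_eq_renT, renT_renT]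
      exact renT_ext (fun m => by rw [TT.liftF_ge (by omega)]; omega) N

theorem exts_substFT (k : ℕ) (N : Tm) : ∀ n, extsT (substFT k N) n = substFT (k+1) N n := by
  intro n
  cases n with
  | zero => simp [extsT, substFT]
  | succ n =>
      have e : extsT (substFT k N) (n+1) = renT Nat.succ (substFT k N n) := rfl
      rw [e]
      rcases lt_trichotomy n k with h | h | h
      · have h1 : n + 1 < k + 1 := by omega
        simp only [substFT, if_pos h, if_pos h1, renT]
      · subst h
        have e1 : substFT n N n = renT (· + n) N := by simp [substFT]
        have e2 : substFT (n+1) N (n+1) = renT (· + (n+1)) N := by simp [substFT]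
        rw [e1, e2, renT_renT]
        exact renT_ext (fun m => by omega) N
      · have h1 : ¬ n < k := by omega
        have h2 : ¬ n = k := by omega
        have h3 : ¬ n + 1 < k + 1 := by omega
        have h4 : ¬ n + 1 = k + 1 := by omega
        simp only [substFT, if_neg h1, if_neg h2, if_neg h3, if_neg h4, renT]
        congr 1
        omega

theorem subst_eq_subT (k : ℕ) (N : Tm) : ∀ t, Tm.subst k N t = subT (substFT k N) t := by
  intro t
  induction t generalizing k with
  | type => rfl
  | pi σ τ ih1 ih2 =>
      simp only [Tm.subst, subT]; exact congrArg₂ _ (ih1 _) ((ih2 _).trans (subT_ext (fun n => (exts_substFT k N n).symm) _))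
  | rarr σ τ ih1 ih2 =>
      simp only [Tm.subst, subT]; exact congrArg₂ _ (ih1 _) (ih2 _)
  | inter σ τ ih1 ih2 =>
      simp only [Tm.subst, subT]; exact congrArg₂ _ (ih1 _) (ih2 _)
  | union σ τ ih1 ih2 =>
      simp only [Tm.subst, subT]; exact congrArg₂ _ (ih1 _) (ih2 _)
  | const c => rfl
  | var n =>
      rcases lt_trichotomy n k with h | h | h
      · simp [Tm.subst, subT, substFT, h]
      · subst h
        simp only [Tm.subst, subT, substFT, lt_irrefl, if_false, if_pos rfl]
        exact iter_lift_renT n N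
      · have h1 : ¬ n < k := by omega
        have h2 : ¬ n = k := by omega
        simp [Tm.subst, subT, substFT, h1, h2]
  | lam σ Δ ih1 ih2 =>
      simp only [Tm.subst, subT]; exact congrArg₂ _ (ih1 _) ((ih2 _).trans (subT_ext (fun n => (exts_substFT k N n).symm) _))
  | app a b ih1 ih2 =>
      simp only [Tm.subst, subT]; exact congrArg₂ _ (ih1 _) (ih2 _)
  | rlam σ Δ ih1 ih2 =>
      simp only [Tm.subst, subT]; exact congrArg₂ _ (ih1 _) ((ih2 _).trans (subT_ext (fun n => (exts_substFT k N n).symm) _))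
  | rapp a b ih1 ih2 =>
      simp only [Tm.subst, subT]; exact congrArg₂ _ (ih1 _) (ih2 _)
  | pair a b ih1 ih2 =>
      simp only [Tm.subst, subT]; exact congrArg₂ _ (ih1 _) (ih2 _)
  | copair a b ih1 ih2 =>
      simp only [Tm.subst, subT]; exact congrArg₂ _ (ih1 _) (ih2 _)
  | prl a ih1 =>
      simp only [Tm.subst, subT]; exact congrArg _ (ih1 _)
  | prr a ih1 =>
      simp only [Tm.subst, subT]; exact congrArg _ (ih1 _)
  | inl σ a ih1 ih2 =>
      simp only [Tm.subst, subT]; exact congrArg₂ _ (ih1 _) (ih2 _)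
  | inr σ a ih1 ih2 =>
      simp only [Tm.subst, subT]; exact congrArg₂ _ (ih1 _) (ih2 _)

theorem substFT_zero_zero (N : Tm) : substFT 0 N 0 = N := by
  simp only [substFT, lt_irrefl, if_false, if_pos rfl]
  exact renT_plus_zero N

theorem subT_subst0 (ρ : ℕ → Tm) (a b : Tm) :
    subT ρ (Tm.subst 0 a b) = Tm.subst 0 (subT ρ a) (subT (extsT ρ) b) := by
  rw [subst_eq_subT, subst_eq_subT, subT_subT, subT_subT]
  refine subT_ext (fun n => ?_) b
  cases n with
  | zero =>
      rw [substFT_zero_zero]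
      have e : extsT ρ 0 = Tm.var 0 := rfl
      rw [e]
      have e2 : subT (substFT 0 (subT ρ a)) (Tm.var 0) = substFT 0 (subT ρ a) 0 := rfl
      rw [e2, substFT_zero_zero]
  | succ n =>
      have e1 : substFT 0 a (n+1) = Tm.var n := by simp [substFT]
      have e2 : extsT ρ (n+1) = renT Nat.succ (ρ n) := rfl
      rw [e1, e2, subT_renT]
      have e3 : subT ρ (Tm.var n) = ρ n := rfl
      rw [e3]
      rw [subT_ext (ρ' := Tm.var) (fun m => by simp [substFT]) (ρ n), subT_id]

theorem renT_subst0 (ξ : ℕ → ℕ) (a b : Tm) :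
    renT ξ (Tm.subst 0 a b) = Tm.subst 0 (renT ξ a) (renT (TT.extr ξ) b) := by
  rw [subst_eq_subT, subst_eq_subT, renT_subT, subT_renT]
  refine subT_ext (fun n => ?_) b
  cases n with
  | zero =>
      rw [substFT_zero_zero]
      have e : TT.extr ξ 0 = 0 := rfl
      rw [e, substFT_zero_zero]
  | succ n =>
      have e1 : substFT 0 a (n+1) = Tm.var n := by simp [substFT]
      rw [e1]
      have e2 : TT.extr ξ (n+1) = ξ n + 1 := rfl
      rw [e2]
      have e3 : substFT 0 (renT ξ a) (ξ n + 1) = Tm.var (ξ n) := by simp [substFT]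
      rw [e3]
      rfl

end Tm


namespace Tm

/-- Parallel reduction (side-condition-free). -/
inductive Par : Tm → Tm → Prop
| type : Par .type .type
| const (c : ℕ) : Par (.const c) (.const c)
| var (n : ℕ) : Par (.var n) (.var n)
| pi {σ σ' τ τ'} : Par σ σ' → Par τ τ' → Par (.pi σ τ) (.pi σ' τ')
| rarr {σ σ' τ τ'} : Par σ σ' → Par τ τ' → Par (.rarr σ τ) (.rarr σ' τ')
| inter {σ σ' τ τ'} : Par σ σ' → Par τ τ' → Par (.inter σ τ) (.inter σ' τ')
| union {σ σ' τ τ'} : Par σ σ' → Par τ τ' → Par (.union σ τ) (.union σ' τ')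
| lam {σ σ' Δ Δ'} : Par σ σ' → Par Δ Δ' → Par (.lam σ Δ) (.lam σ' Δ')
| rlam {σ σ' Δ Δ'} : Par σ σ' → Par Δ Δ' → Par (.rlam σ Δ) (.rlam σ' Δ')
| app {f f' a a'} : Par f f' → Par a a' → Par (.app f a) (.app f' a')
| rapp {f f' a a'} : Par f f' → Par a a' → Par (.rapp f a) (.rapp f' a')
| pair {a a' b b'} : Par a a' → Par b b' → Par (.pair a b) (.pair a' b')
| copair {a a' b b'} : Par a a' → Par b b' → Par (.copair a b) (.copair a' b')
| prlC {a a'} : Par a a' → Par (.prl a) (.prl a')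
| prrC {a a'} : Par a a' → Par (.prr a) (.prr a')
| inl {σ σ' a a'} : Par σ σ' → Par a a' → Par (.inl σ a) (.inl σ' a')
| inr {σ σ' a a'} : Par σ σ' → Par a a' → Par (.inr σ a) (.inr σ' a')
| beta {σ b b' a a'} : Par b b' → Par a a' → Par (.app (.lam σ b) a) (Tm.subst 0 a' b')
| rbeta {σ b b' a a'} : Par b b' → Par a a' → Par (.rapp (.rlam σ b) a) (Tm.subst 0 a' b')
| prlPair {a a' b} : Par a a' → Par (.prl (.pair a b)) a'
| prrPair {a b b'} : Par b b' → Par (.prr (.pair a b)) b'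
| coInl {f f' g x x' σ} : Par f f' → Par x x' → Par (.app (.copair f g) (.inl σ x)) (.app f' x')
| coInr {f g g' x x' σ} : Par g g' → Par x x' → Par (.app (.copair f g) (.inr σ x)) (.app g' x')

theorem par_refl : ∀ t, Par t t := by
  intro t
  induction t with
  | type => exact Par.type
  | const c => exact Par.const c
  | var n => exact Par.var n
  | pi _ _ ih1 ih2 => exact Par.pi ih1 ih2
  | rarr _ _ ih1 ih2 => exact Par.rarr ih1 ih2
  | inter _ _ ih1 ih2 => exact Par.inter ih1 ih2
  | union _ _ ih1 ih2 => exact Par.union ih1 ih2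
  | lam _ _ ih1 ih2 => exact Par.lam ih1 ih2
  | rlam _ _ ih1 ih2 => exact Par.rlam ih1 ih2
  | app _ _ ih1 ih2 => exact Par.app ih1 ih2
  | rapp _ _ ih1 ih2 => exact Par.rapp ih1 ih2
  | pair _ _ ih1 ih2 => exact Par.pair ih1 ih2
  | copair _ _ ih1 ih2 => exact Par.copair ih1 ih2
  | prl _ ih => exact Par.prlC ih
  | prr _ ih => exact Par.prrC ih
  | inl _ _ ih1 ih2 => exact Par.inl ih1 ih2
  | inr _ _ ih1 ih2 => exact Par.inr ih1 ih2

theorem step_par {t u : Tm} (h : Step t u) : Par t u := by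
  induction h with
  | beta => exact Par.beta (par_refl _) (par_refl _)
  | rbeta => exact Par.rbeta (par_refl _) (par_refl _)
  | prl => exact Par.prlPair (par_refl _)
  | prr => exact Par.prrPair (par_refl _)
  | coInl => exact Par.coInl (par_refl _) (par_refl _)
  | coInr => exact Par.coInr (par_refl _) (par_refl _)
  | piL _ ih => exact Par.pi ih (par_refl _)
  | piR _ ih => exact Par.pi (par_refl _) ih
  | rarrL _ ih => exact Par.rarr ih (par_refl _)
  | rarrR _ ih => exact Par.rarr (par_refl _) ih
  | interL _ ih => exact Par.inter ih (par_refl _)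
  | interR _ ih => exact Par.inter (par_refl _) ih
  | unionL _ ih => exact Par.union ih (par_refl _)
  | unionR _ ih => exact Par.union (par_refl _) ih
  | lamL _ ih => exact Par.lam ih (par_refl _)
  | lamR _ ih => exact Par.lam (par_refl _) ih
  | rlamL _ ih => exact Par.rlam ih (par_refl _)
  | rlamR _ ih => exact Par.rlam (par_refl _) ih
  | appL _ ih => exact Par.app ih (par_refl _)
  | appR _ ih => exact Par.app (par_refl _) ih
  | rappL _ ih => exact Par.rapp ih (par_refl _)
  | rappR _ ih => exact Par.rapp (par_refl _) ih
  | prlC _ ih => exact Par.prlC ih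
  | prrC _ ih => exact Par.prrC ih
  | inlL _ ih => exact Par.inl ih (par_refl _)
  | inlR _ ih => exact Par.inl (par_refl _) ih
  | inrL _ ih => exact Par.inr ih (par_refl _)
  | inrR _ ih => exact Par.inr (par_refl _) ih
  | pairC h1 h2 _ ih1 ih2 => exact Par.pair ih1 ih2
  | copairC h1 h2 _ ih1 ih2 => exact Par.copair ih1 ih2

theorem par_renT {t u : Tm} (h : Par t u) : ∀ ξ, Par (renT ξ t) (renT ξ u) := by
  induction h with
  | type => intro ξ; exact Par.type
  | const c => intro ξ; exact Par.const c
  | var n => intro ξ; exact Par.var _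
  | pi _ _ ih1 ih2 => intro ξ; exact Par.pi (ih1 ξ) (ih2 _)
  | rarr _ _ ih1 ih2 => intro ξ; exact Par.rarr (ih1 ξ) (ih2 ξ)
  | inter _ _ ih1 ih2 => intro ξ; exact Par.inter (ih1 ξ) (ih2 ξ)
  | union _ _ ih1 ih2 => intro ξ; exact Par.union (ih1 ξ) (ih2 ξ)
  | lam _ _ ih1 ih2 => intro ξ; exact Par.lam (ih1 ξ) (ih2 _)
  | rlam _ _ ih1 ih2 => intro ξ; exact Par.rlam (ih1 ξ) (ih2 _)
  | app _ _ ih1 ih2 => intro ξ; exact Par.app (ih1 ξ) (ih2 ξ)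
  | rapp _ _ ih1 ih2 => intro ξ; exact Par.rapp (ih1 ξ) (ih2 ξ)
  | pair _ _ ih1 ih2 => intro ξ; exact Par.pair (ih1 ξ) (ih2 ξ)
  | copair _ _ ih1 ih2 => intro ξ; exact Par.copair (ih1 ξ) (ih2 ξ)
  | prlC _ ih => intro ξ; exact Par.prlC (ih ξ)
  | prrC _ ih => intro ξ; exact Par.prrC (ih ξ)
  | inl _ _ ih1 ih2 => intro ξ; exact Par.inl (ih1 ξ) (ih2 ξ)
  | inr _ _ ih1 ih2 => intro ξ; exact Par.inr (ih1 ξ) (ih2 ξ)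
  | beta _ _ ih1 ih2 =>
      intro ξ
      simp only [renT, renT_subst0]
      exact Par.beta (ih1 _) (ih2 ξ)
  | rbeta _ _ ih1 ih2 =>
      intro ξ
      simp only [renT, renT_subst0]
      exact Par.rbeta (ih1 _) (ih2 ξ)
  | prlPair _ ih => intro ξ; exact Par.prlPair (ih ξ)
  | prrPair _ ih => intro ξ; exact Par.prrPair (ih ξ)
  | coInl _ _ ih1 ih2 => intro ξ; exact Par.coInl (ih1 ξ) (ih2 ξ)
  | coInr _ _ ih1 ih2 => intro ξ; exact Par.coInr (ih1 ξ) (ih2 ξ)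

theorem par_exts {ρ ρ' : ℕ → Tm} (h : ∀ n, Par (ρ n) (ρ' n)) :
    ∀ n, Par (extsT ρ n) (extsT ρ' n) := by
  intro n
  cases n with
  | zero => exact Par.var 0
  | succ n => exact par_renT (h n) _

theorem par_subT {t u : Tm} (h : Par t u) :
    ∀ ρ ρ', (∀ n, Par (ρ n) (ρ' n)) → Par (subT ρ t) (subT ρ' u) := by
  induction h with
  | type => intro ρ ρ' hρ; exact Par.type
  | const c => intro ρ ρ' hρ; exact Par.const c
  | var n => intro ρ ρ' hρ; exact hρ n
  | pi _ _ ih1 ih2 => intro ρ ρ' hρ; exact Par.pi (ih1 _ _ hρ) (ih2 _ _ (par_exts hρ))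
  | rarr _ _ ih1 ih2 => intro ρ ρ' hρ; exact Par.rarr (ih1 _ _ hρ) (ih2 _ _ hρ)
  | inter _ _ ih1 ih2 => intro ρ ρ' hρ; exact Par.inter (ih1 _ _ hρ) (ih2 _ _ hρ)
  | union _ _ ih1 ih2 => intro ρ ρ' hρ; exact Par.union (ih1 _ _ hρ) (ih2 _ _ hρ)
  | lam _ _ ih1 ih2 => intro ρ ρ' hρ; exact Par.lam (ih1 _ _ hρ) (ih2 _ _ (par_exts hρ))
  | rlam _ _ ih1 ih2 => intro ρ ρ' hρ; exact Par.rlam (ih1 _ _ hρ) (ih2 _ _ (par_exts hρ))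
  | app _ _ ih1 ih2 => intro ρ ρ' hρ; exact Par.app (ih1 _ _ hρ) (ih2 _ _ hρ)
  | rapp _ _ ih1 ih2 => intro ρ ρ' hρ; exact Par.rapp (ih1 _ _ hρ) (ih2 _ _ hρ)
  | pair _ _ ih1 ih2 => intro ρ ρ' hρ; exact Par.pair (ih1 _ _ hρ) (ih2 _ _ hρ)
  | copair _ _ ih1 ih2 => intro ρ ρ' hρ; exact Par.copair (ih1 _ _ hρ) (ih2 _ _ hρ)
  | prlC _ ih => intro ρ ρ' hρ; exact Par.prlC (ih _ _ hρ)
  | prrC _ ih => intro ρ ρ' hρ; exact Par.prrC (ih _ _ hρ)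
  | inl _ _ ih1 ih2 => intro ρ ρ' hρ; exact Par.inl (ih1 _ _ hρ) (ih2 _ _ hρ)
  | inr _ _ ih1 ih2 => intro ρ ρ' hρ; exact Par.inr (ih1 _ _ hρ) (ih2 _ _ hρ)
  | beta _ _ ih1 ih2 =>
      intro ρ ρ' hρ
      simp only [subT, subT_subst0]
      exact Par.beta (ih1 _ _ (par_exts hρ)) (ih2 _ _ hρ)
  | rbeta _ _ ih1 ih2 =>
      intro ρ ρ' hρ
      simp only [subT, subT_subst0]
      exact Par.rbeta (ih1 _ _ (par_exts hρ)) (ih2 _ _ hρ)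
  | prlPair _ ih => intro ρ ρ' hρ; exact Par.prlPair (ih _ _ hρ)
  | prrPair _ ih => intro ρ ρ' hρ; exact Par.prrPair (ih _ _ hρ)
  | coInl _ _ ih1 ih2 => intro ρ ρ' hρ; exact Par.coInl (ih1 _ _ hρ) (ih2 _ _ hρ)
  | coInr _ _ ih1 ih2 => intro ρ ρ' hρ; exact Par.coInr (ih1 _ _ hρ) (ih2 _ _ hρ)

theorem par_subst0 {b b' a a' : Tm} (hb : Par b b') (ha : Par a a') :
    Par (Tm.subst 0 a b) (Tm.subst 0 a' b') := by
  rw [subst_eq_subT, subst_eq_subT]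
  refine par_subT hb _ _ (fun n => ?_)
  cases n with
  | zero => rw [substFT_zero_zero, substFT_zero_zero]; exact ha
  | succ n =>
      have e : substFT 0 a (n+1) = Tm.var n := by simp [substFT]
      have e' : substFT 0 a' (n+1) = Tm.var n := by simp [substFT]
      rw [e, e']
      exact Par.var n

/-- Complete development. -/
def dev : Tm → Tm
| .type => .type
| .pi σ τ => .pi (dev σ) (dev τ)
| .rarr σ τ => .rarr (dev σ) (dev τ)
| .inter σ τ => .inter (dev σ) (dev τ)
| .union σ τ => .union (dev σ) (dev τ)
| .const c => .const c
| .var n => .var n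
| .lam σ Δ => .lam (dev σ) (dev Δ)
| .rlam σ Δ => .rlam (dev σ) (dev Δ)
| .app (.lam _ b) a => Tm.subst 0 (dev a) (dev b)
| .app (.copair f _) (.inl _ x) => .app (dev f) (dev x)
| .app (.copair _ g) (.inr _ x) => .app (dev g) (dev x)
| .app f a => .app (dev f) (dev a)
| .rapp (.rlam _ b) a => Tm.subst 0 (dev a) (dev b)
| .rapp f a => .rapp (dev f) (dev a)
| .pair a b => .pair (dev a) (dev b)
| .copair a b => .copair (dev a) (dev b)
| .prl (.pair a _) => dev a
| .prl a => .prl (dev a)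
| .prr (.pair _ b) => dev b
| .prr a => .prr (dev a)
| .inl σ a => .inl (dev σ) (dev a)
| .inr σ a => .inr (dev σ) (dev a)

theorem par_lam_inv {σ b u} (h : Par (.lam σ b) u) :
    ∃ σ' b', u = .lam σ' b' ∧ Par σ σ' ∧ Par b b' := by
  cases h with
  | lam h1 h2 => exact ⟨_, _, rfl, h1, h2⟩

theorem par_rlam_inv {σ b u} (h : Par (.rlam σ b) u) :
    ∃ σ' b', u = .rlam σ' b' ∧ Par σ σ' ∧ Par b b' := by
  cases h with
  | rlam h1 h2 => exact ⟨_, _, rfl, h1, h2⟩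

theorem par_pair_inv {a b u} (h : Par (.pair a b) u) :
    ∃ a' b', u = .pair a' b' ∧ Par a a' ∧ Par b b' := by
  cases h with
  | pair h1 h2 => exact ⟨_, _, rfl, h1, h2⟩

theorem par_copair_inv {a b u} (h : Par (.copair a b) u) :
    ∃ a' b', u = .copair a' b' ∧ Par a a' ∧ Par b b' := by
  cases h with
  | copair h1 h2 => exact ⟨_, _, rfl, h1, h2⟩

theorem par_inl_inv {σ a u} (h : Par (.inl σ a) u) :
    ∃ σ' a', u = .inl σ' a' ∧ Par σ σ' ∧ Par a a' := by
  cases h with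
  | inl h1 h2 => exact ⟨_, _, rfl, h1, h2⟩

theorem par_inr_inv {σ a u} (h : Par (.inr σ a) u) :
    ∃ σ' a', u = .inr σ' a' ∧ Par σ σ' ∧ Par a a' := by
  cases h with
  | inr h1 h2 => exact ⟨_, _, rfl, h1, h2⟩

theorem par_dev {t u : Tm} (h : Par t u) : Par u (dev t) := by
  induction h with
  | type => exact Par.type
  | const c => exact Par.const c
  | var n => exact Par.var n
  | pi _ _ ih1 ih2 => exact Par.pi ih1 ih2
  | rarr _ _ ih1 ih2 => exact Par.rarr ih1 ih2
  | inter _ _ ih1 ih2 => exact Par.inter ih1 ih2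
  | union _ _ ih1 ih2 => exact Par.union ih1 ih2
  | lam _ _ ih1 ih2 => exact Par.lam ih1 ih2
  | rlam _ _ ih1 ih2 => exact Par.rlam ih1 ih2
  | @app f f' a a' h1 h2 ih1 ih2 =>
      cases f with
      | lam σ b =>
          obtain ⟨σ₁, b₁, rfl, hσ, hb⟩ := par_lam_inv h1
          simp only [dev] at ih1 ⊢
          obtain ⟨σ₂, b₂, hX, hσ₂, hb₂⟩ := par_lam_inv ih1
          injection hX with hX1 hX2
          subst hX1; subst hX2
          exact Par.beta hb₂ ih2
      | copair f₁ g₁ =>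
          cases a with
          | inl σ x =>
              obtain ⟨σ₁, x₁, rfl, hσ, hx⟩ := par_inl_inv h2
              simp only [dev] at ih1 ih2 ⊢
              obtain ⟨f₂, g₂, rfl, hf, hg⟩ := par_copair_inv h1
              obtain ⟨f₃, g₃, hX, hf₃, hg₃⟩ := par_copair_inv ih1
              injection hX with hX1 hX2
              subst hX1; subst hX2
              obtain ⟨σ₃, x₃, hY, hσ₃, hx₃⟩ := par_inl_inv ih2
              injection hY with hY1 hY2
              subst hY1; subst hY2
              exact Par.coInl hf₃ hx₃
          | inr σ x =>
              obtain ⟨σ₁, x₁, rfl, hσ, hx⟩ := par_inr_inv h2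
              simp only [dev] at ih1 ih2 ⊢
              obtain ⟨f₂, g₂, rfl, hf, hg⟩ := par_copair_inv h1
              obtain ⟨f₃, g₃, hX, hf₃, hg₃⟩ := par_copair_inv ih1
              injection hX with hX1 hX2
              subst hX1; subst hX2
              obtain ⟨σ₃, x₃, hY, hσ₃, hx₃⟩ := par_inr_inv ih2
              injection hY with hY1 hY2
              subst hY1; subst hY2
              exact Par.coInr hg₃ hx₃
          | type => simp only [dev]; exact Par.app ih1 ih2
          | pi σ τ => simp only [dev]; exact Par.app ih1 ih2
          | rarr σ τ => simp only [dev]; exact Par.app ih1 ih2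
          | inter σ τ => simp only [dev]; exact Par.app ih1 ih2
          | union σ τ => simp only [dev]; exact Par.app ih1 ih2
          | const c => simp only [dev]; exact Par.app ih1 ih2
          | var n => simp only [dev]; exact Par.app ih1 ih2
          | lam σ Δ => simp only [dev]; exact Par.app ih1 ih2
          | app a b => simp only [dev]; exact Par.app ih1 ih2
          | rlam σ Δ => simp only [dev]; exact Par.app ih1 ih2
          | rapp a b => simp only [dev]; exact Par.app ih1 ih2
          | pair a b => simp only [dev]; exact Par.app ih1 ih2
          | copair a b => simp only [dev]; exact Par.app ih1 ih2
          | prl a => simp only [dev]; exact Par.app ih1 ih2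
          | prr a => simp only [dev]; exact Par.app ih1 ih2
      | type => simp only [dev]; exact Par.app ih1 ih2
      | pi σ τ => simp only [dev]; exact Par.app ih1 ih2
      | rarr σ τ => simp only [dev]; exact Par.app ih1 ih2
      | inter σ τ => simp only [dev]; exact Par.app ih1 ih2
      | union σ τ => simp only [dev]; exact Par.app ih1 ih2
      | const c => simp only [dev]; exact Par.app ih1 ih2
      | var n => simp only [dev]; exact Par.app ih1 ih2
      | app a b => simp only [dev]; exact Par.app ih1 ih2
      | rlam σ Δ => simp only [dev]; exact Par.app ih1 ih2
      | rapp a b => simp only [dev]; exact Par.app ih1 ih2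
      | pair a b => simp only [dev]; exact Par.app ih1 ih2
      | prl a => simp only [dev]; exact Par.app ih1 ih2
      | prr a => simp only [dev]; exact Par.app ih1 ih2
      | inl σ a => simp only [dev]; exact Par.app ih1 ih2
      | inr σ a => simp only [dev]; exact Par.app ih1 ih2
  | @rapp f f' a a' h1 h2 ih1 ih2 =>
      cases f with
      | rlam σ b =>
          obtain ⟨σ₁, b₁, rfl, hσ, hb⟩ := par_rlam_inv h1
          simp only [dev] at ih1 ⊢
          obtain ⟨σ₂, b₂, hX, hσ₂, hb₂⟩ := par_rlam_inv ih1
          injection hX with hX1 hX2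
          subst hX1; subst hX2
          exact Par.rbeta hb₂ ih2
      | type => simp only [dev]; exact Par.rapp ih1 ih2
      | pi σ τ => simp only [dev]; exact Par.rapp ih1 ih2
      | rarr σ τ => simp only [dev]; exact Par.rapp ih1 ih2
      | inter σ τ => simp only [dev]; exact Par.rapp ih1 ih2
      | union σ τ => simp only [dev]; exact Par.rapp ih1 ih2
      | const c => simp only [dev]; exact Par.rapp ih1 ih2
      | var n => simp only [dev]; exact Par.rapp ih1 ih2
      | lam σ Δ => simp only [dev]; exact Par.rapp ih1 ih2
      | app a b => simp only [dev]; exact Par.rapp ih1 ih2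
      | rapp a b => simp only [dev]; exact Par.rapp ih1 ih2
      | pair a b => simp only [dev]; exact Par.rapp ih1 ih2
      | copair a b => simp only [dev]; exact Par.rapp ih1 ih2
      | prl a => simp only [dev]; exact Par.rapp ih1 ih2
      | prr a => simp only [dev]; exact Par.rapp ih1 ih2
      | inl σ a => simp only [dev]; exact Par.rapp ih1 ih2
      | inr σ a => simp only [dev]; exact Par.rapp ih1 ih2
  | @prlC d d' h ih =>
      cases d with
      | pair x y =>
          obtain ⟨x₁, y₁, rfl, hx, hy⟩ := par_pair_inv h
          simp only [dev] at ih ⊢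
          obtain ⟨x₂, y₂, hX, hx₂, hy₂⟩ := par_pair_inv ih
          injection hX with hX1 hX2
          subst hX1; subst hX2
          exact Par.prlPair hx₂
      | type => simp only [dev]; exact Par.prlC ih
      | pi σ τ => simp only [dev]; exact Par.prlC ih
      | rarr σ τ => simp only [dev]; exact Par.prlC ih
      | inter σ τ => simp only [dev]; exact Par.prlC ih
      | union σ τ => simp only [dev]; exact Par.prlC ih
      | const c => simp only [dev]; exact Par.prlC ih
      | var n => simp only [dev]; exact Par.prlC ih
      | lam σ Δ => simp only [dev]; exact Par.prlC ih
      | app a b => simp only [dev]; exact Par.prlC ih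
      | rlam σ Δ => simp only [dev]; exact Par.prlC ih
      | rapp a b => simp only [dev]; exact Par.prlC ih
      | copair a b => simp only [dev]; exact Par.prlC ih
      | prl a => simp only [dev]; exact Par.prlC ih
      | prr a => simp only [dev]; exact Par.prlC ih
      | inl σ a => simp only [dev]; exact Par.prlC ih
      | inr σ a => simp only [dev]; exact Par.prlC ih
  | @prrC d d' h ih =>
      cases d with
      | pair x y =>
          obtain ⟨x₁, y₁, rfl, hx, hy⟩ := par_pair_inv h
          simp only [dev] at ih ⊢
          obtain ⟨x₂, y₂, hX, hx₂, hy₂⟩ := par_pair_inv ih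
          injection hX with hX1 hX2
          subst hX1; subst hX2
          exact Par.prrPair hy₂
      | type => simp only [dev]; exact Par.prrC ih
      | pi σ τ => simp only [dev]; exact Par.prrC ih
      | rarr σ τ => simp only [dev]; exact Par.prrC ih
      | inter σ τ => simp only [dev]; exact Par.prrC ih
      | union σ τ => simp only [dev]; exact Par.prrC ih
      | const c => simp only [dev]; exact Par.prrC ih
      | var n => simp only [dev]; exact Par.prrC ih
      | lam σ Δ => simp only [dev]; exact Par.prrC ih
      | app a b => simp only [dev]; exact Par.prrC ih
      | rlam σ Δ => simp only [dev]; exact Par.prrC ih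
      | rapp a b => simp only [dev]; exact Par.prrC ih
      | copair a b => simp only [dev]; exact Par.prrC ih
      | prl a => simp only [dev]; exact Par.prrC ih
      | prr a => simp only [dev]; exact Par.prrC ih
      | inl σ a => simp only [dev]; exact Par.prrC ih
      | inr σ a => simp only [dev]; exact Par.prrC ih
  | inl _ _ ih1 ih2 => exact Par.inl ih1 ih2
  | inr _ _ ih1 ih2 => exact Par.inr ih1 ih2
  | pair _ _ ih1 ih2 => exact Par.pair ih1 ih2
  | copair _ _ ih1 ih2 => exact Par.copair ih1 ih2
  | beta _ _ ih1 ih2 =>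
      simp only [dev]
      exact par_subst0 ih1 ih2
  | rbeta _ _ ih1 ih2 =>
      simp only [dev]
      exact par_subst0 ih1 ih2
  | prlPair _ ih => simp only [dev]; exact ih
  | prrPair _ ih => simp only [dev]; exact ih
  | coInl _ _ ih1 ih2 => simp only [dev]; exact Par.app ih1 ih2
  | coInr _ _ ih1 ih2 => simp only [dev]; exact Par.app ih1 ih2

abbrev ParS : Tm → Tm → Prop := Relation.ReflTransGen Par

theorem par_diamond {t u v : Tm} (h1 : Par t u) (h2 : Par t v) :
    ∃ w, Par u w ∧ Par v w := ⟨dev t, par_dev h1, par_dev h2⟩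

theorem par_strip {t u v : Tm} (h : Par t u) (hs : ParS t v) :
    ∃ w, ParS u w ∧ Par v w := by
  induction hs with
  | refl => exact ⟨u, Relation.ReflTransGen.refl, h⟩
  | tail _ hbc ih =>
      obtain ⟨w, huw, hbw⟩ := ih
      obtain ⟨z, hwz, hcz⟩ := par_diamond hbw hbc
      exact ⟨z, huw.tail hwz, hcz⟩

theorem pars_confluent {t u v : Tm} (h1 : ParS t u) (h2 : ParS t v) :
    ∃ w, ParS u w ∧ ParS v w := by
  induction h1 with
  | refl => exact ⟨v, h2, Relation.ReflTransGen.refl⟩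
  | tail _ hbc ih =>
      obtain ⟨w, hbw, hvw⟩ := ih
      obtain ⟨z, hcz, hwz⟩ := par_strip hbc hbw
      exact ⟨z, hcz, hvw.tail hwz⟩

theorem conv_join {a b : Tm} (h : Conv Step a b) : ∃ c, ParS a c ∧ ParS b c := by
  induction h with
  | rel hr => exact ⟨_, Relation.ReflTransGen.single (step_par hr), Relation.ReflTransGen.refl⟩
  | refl a => exact ⟨a, Relation.ReflTransGen.refl, Relation.ReflTransGen.refl⟩
  | symm _ ih => obtain ⟨c, h1, h2⟩ := ih; exact ⟨c, h2, h1⟩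
  | trans _ _ ih1 ih2 =>
      obtain ⟨c₁, ha, hb₁⟩ := ih1
      obtain ⟨c₂, hb₂, hc⟩ := ih2
      obtain ⟨d, hd₁, hd₂⟩ := pars_confluent hb₁ hb₂
      exact ⟨d, ha.trans hd₁, hc.trans hd₂⟩

end Tm


namespace Tm

/-- Family-shaped terms. -/
def Fs : Tm → Prop
| .const _ => True
| .pi σ τ => Fs σ ∧ Fs τ
| .rarr σ τ => Fs σ ∧ Fs τ
| .inter σ τ => Fs σ ∧ Fs τ
| .union σ τ => Fs σ ∧ Fs τ
| .app σ _ => Fs σ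
| _ => False

/-- Erasure of families to simple types. -/
def Ob : Tm → ST
| .pi σ τ => ST.arr (Ob σ) (Ob τ)
| .rarr σ τ => ST.arr (Ob σ) (Ob τ)
| .inter σ τ => ST.prod (Ob σ) (Ob τ)
| .union σ τ => ST.sum (Ob σ) (Ob τ)
| .app σ _ => Ob σ
| _ => ST.top

/-- Kind-shaped terms. -/
def Ks : Tm → Prop
| .type => True
| .pi σ K => Fs σ ∧ Ks K
| _ => False

/-- Domains of a kind. -/
def Doms : Tm → List ST
| .pi σ K => Ob σ :: Doms K
| _ => []

theorem ob_renT : ∀ (t : Tm) (ξ : ℕ → ℕ), Ob (renT ξ t) = Ob t := by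
  intro t
  induction t with
  | type => intro ξ; rfl
  | pi σ τ ih1 ih2 => intro ξ; simp [renT, Ob, ih1, ih2]
  | rarr σ τ ih1 ih2 => intro ξ; simp [renT, Ob, ih1, ih2]
  | inter σ τ ih1 ih2 => intro ξ; simp [renT, Ob, ih1, ih2]
  | union σ τ ih1 ih2 => intro ξ; simp [renT, Ob, ih1, ih2]
  | const c => intro ξ; rfl
  | var n => intro ξ; rfl
  | lam σ Δ ih1 ih2 => intro ξ; rfl
  | app a b ih1 ih2 => intro ξ; simp [renT, Ob, ih1]
  | rlam σ Δ ih1 ih2 => intro ξ; rfl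
  | rapp a b ih1 ih2 => intro ξ; rfl
  | pair a b ih1 ih2 => intro ξ; rfl
  | copair a b ih1 ih2 => intro ξ; rfl
  | prl a ih => intro ξ; rfl
  | prr a ih => intro ξ; rfl
  | inl σ a ih1 ih2 => intro ξ; rfl
  | inr σ a ih1 ih2 => intro ξ; rfl

theorem fs_renT_iff : ∀ (t : Tm) (ξ : ℕ → ℕ), Fs (renT ξ t) ↔ Fs t := by
  intro t
  induction t with
  | type => intro ξ; simp [renT, Fs]
  | pi σ τ ih1 ih2 => intro ξ; simp [renT, Fs, ih1, ih2]
  | rarr σ τ ih1 ih2 => intro ξ; simp [renT, Fs, ih1, ih2]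
  | inter σ τ ih1 ih2 => intro ξ; simp [renT, Fs, ih1, ih2]
  | union σ τ ih1 ih2 => intro ξ; simp [renT, Fs, ih1, ih2]
  | const c => intro ξ; simp [renT, Fs]
  | var n => intro ξ; simp [renT, Fs]
  | lam σ Δ ih1 ih2 => intro ξ; simp [renT, Fs]
  | app a b ih1 ih2 => intro ξ; simp [renT, Fs, ih1]
  | rlam σ Δ ih1 ih2 => intro ξ; simp [renT, Fs]
  | rapp a b ih1 ih2 => intro ξ; simp [renT, Fs]
  | pair a b ih1 ih2 => intro ξ; simp [renT, Fs]
  | copair a b ih1 ih2 => intro ξ; simp [renT, Fs]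
  | prl a ih => intro ξ; simp [renT, Fs]
  | prr a ih => intro ξ; simp [renT, Fs]
  | inl σ a ih1 ih2 => intro ξ; simp [renT, Fs]
  | inr σ a ih1 ih2 => intro ξ; simp [renT, Fs]

theorem ks_renT_iff : ∀ (t : Tm) (ξ : ℕ → ℕ), Ks (renT ξ t) ↔ Ks t := by
  intro t
  induction t with
  | pi σ τ ih1 ih2 => intro ξ; simp [renT, Ks, fs_renT_iff, ih2]
  | type => intro ξ; simp [renT, Ks]
  | rarr σ τ ih1 ih2 => intro ξ; simp [renT, Ks]
  | inter σ τ ih1 ih2 => intro ξ; simp [renT, Ks]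
  | union σ τ ih1 ih2 => intro ξ; simp [renT, Ks]
  | const c => intro ξ; simp [renT, Ks]
  | var n => intro ξ; simp [renT, Ks]
  | lam σ Δ ih1 ih2 => intro ξ; simp [renT, Ks]
  | app a b ih1 ih2 => intro ξ; simp [renT, Ks]
  | rlam σ Δ ih1 ih2 => intro ξ; simp [renT, Ks]
  | rapp a b ih1 ih2 => intro ξ; simp [renT, Ks]
  | pair a b ih1 ih2 => intro ξ; simp [renT, Ks]
  | copair a b ih1 ih2 => intro ξ; simp [renT, Ks]
  | prl a ih => intro ξ; simp [renT, Ks]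
  | prr a ih => intro ξ; simp [renT, Ks]
  | inl σ a ih1 ih2 => intro ξ; simp [renT, Ks]
  | inr σ a ih1 ih2 => intro ξ; simp [renT, Ks]

theorem doms_renT : ∀ (t : Tm) (ξ : ℕ → ℕ), Doms (renT ξ t) = Doms t := by
  intro t
  induction t with
  | pi σ τ ih1 ih2 => intro ξ; simp [renT, Doms, ob_renT, ih2]
  | type => intro ξ; rfl
  | rarr σ τ ih1 ih2 => intro ξ; rfl
  | inter σ τ ih1 ih2 => intro ξ; rfl
  | union σ τ ih1 ih2 => intro ξ; rfl
  | const c => intro ξ; rfl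
  | var n => intro ξ; rfl
  | lam σ Δ ih1 ih2 => intro ξ; rfl
  | app a b ih1 ih2 => intro ξ; rfl
  | rlam σ Δ ih1 ih2 => intro ξ; rfl
  | rapp a b ih1 ih2 => intro ξ; rfl
  | pair a b ih1 ih2 => intro ξ; rfl
  | copair a b ih1 ih2 => intro ξ; rfl
  | prl a ih => intro ξ; rfl
  | prr a ih => intro ξ; rfl
  | inl σ a ih1 ih2 => intro ξ; rfl
  | inr σ a ih1 ih2 => intro ξ; rfl

theorem fs_subT : ∀ (t : Tm) (ρ : ℕ → Tm), Fs t → Fs (subT ρ t) ∧ Ob (subT ρ t) = Ob t := by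
  intro t
  induction t with
  | pi σ τ ih1 ih2 =>
      rintro ρ ⟨h1, h2⟩
      obtain ⟨g1, g2⟩ := ih1 ρ h1
      obtain ⟨g3, g4⟩ := ih2 (extsT ρ) h2
      exact ⟨⟨g1, g3⟩, by simp [subT, Ob, g2, g4]⟩
  | rarr σ τ ih1 ih2 =>
      rintro ρ ⟨h1, h2⟩
      obtain ⟨g1, g2⟩ := ih1 ρ h1
      obtain ⟨g3, g4⟩ := ih2 ρ h2
      exact ⟨⟨g1, g3⟩, by simp [subT, Ob, g2, g4]⟩
  | inter σ τ ih1 ih2 =>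
      rintro ρ ⟨h1, h2⟩
      obtain ⟨g1, g2⟩ := ih1 ρ h1
      obtain ⟨g3, g4⟩ := ih2 ρ h2
      exact ⟨⟨g1, g3⟩, by simp [subT, Ob, g2, g4]⟩
  | union σ τ ih1 ih2 =>
      rintro ρ ⟨h1, h2⟩
      obtain ⟨g1, g2⟩ := ih1 ρ h1
      obtain ⟨g3, g4⟩ := ih2 ρ h2
      exact ⟨⟨g1, g3⟩, by simp [subT, Ob, g2, g4]⟩
  | const c => intro ρ h; exact ⟨trivial, rfl⟩
  | app a b ih1 ih2 =>
      intro ρ h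
      obtain ⟨g1, g2⟩ := ih1 ρ h
      exact ⟨g1, by simp [subT, Ob, g2]⟩
  | type => intro ρ h; simp [Fs] at h
  | var n => intro ρ h; simp [Fs] at h
  | lam σ Δ ih1 ih2 => intro ρ h; simp [Fs] at h
  | rlam σ Δ ih1 ih2 => intro ρ h; simp [Fs] at h
  | rapp a b ih1 ih2 => intro ρ h; simp [Fs] at h
  | pair a b ih1 ih2 => intro ρ h; simp [Fs] at h
  | copair a b ih1 ih2 => intro ρ h; simp [Fs] at h
  | prl a ih => intro ρ h; simp [Fs] at h
  | prr a ih => intro ρ h; simp [Fs] at h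
  | inl σ a ih1 ih2 => intro ρ h; simp [Fs] at h
  | inr σ a ih1 ih2 => intro ρ h; simp [Fs] at h

theorem ks_subT : ∀ (t : Tm) (ρ : ℕ → Tm), Ks t → Ks (subT ρ t) ∧ Doms (subT ρ t) = Doms t := by
  intro t
  induction t with
  | pi σ τ ih1 ih2 =>
      rintro ρ ⟨h1, h2⟩
      obtain ⟨g1, g2⟩ := fs_subT σ ρ h1
      obtain ⟨g3, g4⟩ := ih2 (extsT ρ) h2
      exact ⟨⟨g1, g3⟩, by simp [subT, Doms, g2, g4]⟩
  | type => intro ρ h; exact ⟨trivial, rfl⟩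
  | rarr σ τ ih1 ih2 => intro ρ h; simp [Ks] at h
  | inter σ τ ih1 ih2 => intro ρ h; simp [Ks] at h
  | union σ τ ih1 ih2 => intro ρ h; simp [Ks] at h
  | const c => intro ρ h; simp [Ks] at h
  | var n => intro ρ h; simp [Ks] at h
  | lam σ Δ ih1 ih2 => intro ρ h; simp [Ks] at h
  | app a b ih1 ih2 => intro ρ h; simp [Ks] at h
  | rlam σ Δ ih1 ih2 => intro ρ h; simp [Ks] at h
  | rapp a b ih1 ih2 => intro ρ h; simp [Ks] at h
  | pair a b ih1 ih2 => intro ρ h; simp [Ks] at h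
  | copair a b ih1 ih2 => intro ρ h; simp [Ks] at h
  | prl a ih => intro ρ h; simp [Ks] at h
  | prr a ih => intro ρ h; simp [Ks] at h
  | inl σ a ih1 ih2 => intro ρ h; simp [Ks] at h
  | inr σ a ih1 ih2 => intro ρ h; simp [Ks] at h

theorem fs_lift {t : Tm} (c : ℕ) (h : Fs t) : Fs (Tm.lift c t) := by
  rw [lift_eq_renT]; exact (fs_renT_iff t _).mpr h

theorem fs_lift_rev {t : Tm} {c : ℕ} (h : Fs (Tm.lift c t)) : Fs t := by
  rw [lift_eq_renT] at h; exact (fs_renT_iff t _).mp h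

theorem ob_lift (t : Tm) (c : ℕ) : Ob (Tm.lift c t) = Ob t := by
  rw [lift_eq_renT]; exact ob_renT t _

theorem fs_subst {t : Tm} (k : ℕ) (N : Tm) (h : Fs t) : Fs (Tm.subst k N t) := by
  rw [subst_eq_subT]; exact (fs_subT t _ h).1

theorem ob_subst {t : Tm} (k : ℕ) (N : Tm) (h : Fs t) : Ob (Tm.subst k N t) = Ob t := by
  rw [subst_eq_subT]; exact (fs_subT t _ h).2

theorem ks_subst {t : Tm} (k : ℕ) (N : Tm) (h : Ks t) : Ks (Tm.subst k N t) := by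
  rw [subst_eq_subT]; exact (ks_subT t _ h).1

theorem doms_subst {t : Tm} (k : ℕ) (N : Tm) (h : Ks t) : Doms (Tm.subst k N t) = Doms t := by
  rw [subst_eq_subT]; exact (ks_subT t _ h).2

theorem par_fs {t u : Tm} (h : Par t u) : Fs t → Fs u ∧ Ob u = Ob t := by
  induction h with
  | type => intro h; simp [Fs] at h
  | const c => intro h; exact ⟨trivial, rfl⟩
  | var n => intro h; simp [Fs] at h
  | pi _ _ ih1 ih2 =>
      rintro ⟨h1, h2⟩
      obtain ⟨g1, g2⟩ := ih1 h1
      obtain ⟨g3, g4⟩ := ih2 h2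
      exact ⟨⟨g1, g3⟩, by simp [Ob, g2, g4]⟩
  | rarr _ _ ih1 ih2 =>
      rintro ⟨h1, h2⟩
      obtain ⟨g1, g2⟩ := ih1 h1
      obtain ⟨g3, g4⟩ := ih2 h2
      exact ⟨⟨g1, g3⟩, by simp [Ob, g2, g4]⟩
  | inter _ _ ih1 ih2 =>
      rintro ⟨h1, h2⟩
      obtain ⟨g1, g2⟩ := ih1 h1
      obtain ⟨g3, g4⟩ := ih2 h2
      exact ⟨⟨g1, g3⟩, by simp [Ob, g2, g4]⟩
  | union _ _ ih1 ih2 =>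
      rintro ⟨h1, h2⟩
      obtain ⟨g1, g2⟩ := ih1 h1
      obtain ⟨g3, g4⟩ := ih2 h2
      exact ⟨⟨g1, g3⟩, by simp [Ob, g2, g4]⟩
  | lam _ _ ih1 ih2 => intro h; simp [Fs] at h
  | rlam _ _ ih1 ih2 => intro h; simp [Fs] at h
  | app _ _ ih1 ih2 =>
      intro h
      obtain ⟨g1, g2⟩ := ih1 h
      exact ⟨g1, by simp [Ob, g2]⟩
  | rapp _ _ ih1 ih2 => intro h; simp [Fs] at h
  | pair _ _ ih1 ih2 => intro h; simp [Fs] at h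
  | copair _ _ ih1 ih2 => intro h; simp [Fs] at h
  | prlC _ ih => intro h; simp [Fs] at h
  | prrC _ ih => intro h; simp [Fs] at h
  | inl _ _ ih1 ih2 => intro h; simp [Fs] at h
  | inr _ _ ih1 ih2 => intro h; simp [Fs] at h
  | beta _ _ ih1 ih2 => intro h; simp [Fs] at h
  | rbeta _ _ ih1 ih2 => intro h; simp [Fs] at h
  | prlPair _ ih => intro h; simp [Fs] at h
  | prrPair _ ih => intro h; simp [Fs] at h
  | coInl _ _ ih1 ih2 => intro h; simp [Fs] at h
  | coInr _ _ ih1 ih2 => intro h; simp [Fs] at h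

theorem par_ks {t u : Tm} (h : Par t u) : Ks t → Ks u ∧ Doms u = Doms t := by
  induction h with
  | type => intro h; exact ⟨trivial, rfl⟩
  | pi h1 _ ih1 ih2 =>
      rintro ⟨g1, g2⟩
      obtain ⟨f1, f2⟩ := par_fs h1 g1
      obtain ⟨k1, k2⟩ := ih2 g2
      exact ⟨⟨f1, k1⟩, by simp [Doms, f2, k2]⟩
  | const c => intro h; simp [Ks] at h
  | var n => intro h; simp [Ks] at h
  | rarr _ _ ih1 ih2 => intro h; simp [Ks] at h
  | inter _ _ ih1 ih2 => intro h; simp [Ks] at h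
  | union _ _ ih1 ih2 => intro h; simp [Ks] at h
  | lam _ _ ih1 ih2 => intro h; simp [Ks] at h
  | rlam _ _ ih1 ih2 => intro h; simp [Ks] at h
  | app _ _ ih1 ih2 => intro h; simp [Ks] at h
  | rapp _ _ ih1 ih2 => intro h; simp [Ks] at h
  | pair _ _ ih1 ih2 => intro h; simp [Ks] at h
  | copair _ _ ih1 ih2 => intro h; simp [Ks] at h
  | prlC _ ih => intro h; simp [Ks] at h
  | prrC _ ih => intro h; simp [Ks] at h
  | inl _ _ ih1 ih2 => intro h; simp [Ks] at h
  | inr _ _ ih1 ih2 => intro h; simp [Ks] at h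
  | beta _ _ ih1 ih2 => intro h; simp [Ks] at h
  | rbeta _ _ ih1 ih2 => intro h; simp [Ks] at h
  | prlPair _ ih => intro h; simp [Ks] at h
  | prrPair _ ih => intro h; simp [Ks] at h
  | coInl _ _ ih1 ih2 => intro h; simp [Ks] at h
  | coInr _ _ ih1 ih2 => intro h; simp [Ks] at h

theorem pars_fs {t u : Tm} (h : ParS t u) : Fs t → Fs u ∧ Ob u = Ob t := by
  induction h with
  | refl => intro h; exact ⟨h, rfl⟩
  | tail _ hbc ih =>
      intro h
      obtain ⟨g1, g2⟩ := ih h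
      obtain ⟨f1, f2⟩ := par_fs hbc g1
      exact ⟨f1, f2.trans g2⟩

theorem pars_ks {t u : Tm} (h : ParS t u) : Ks t → Ks u ∧ Doms u = Doms t := by
  induction h with
  | refl => intro h; exact ⟨h, rfl⟩
  | tail _ hbc ih =>
      intro h
      obtain ⟨g1, g2⟩ := ih h
      obtain ⟨f1, f2⟩ := par_ks hbc g1
      exact ⟨f1, f2.trans g2⟩

end Tm

theorem defEq_ob {σ τ : Tm} (h : DefEq σ τ) (hσ : Tm.Fs σ) (hτ : Tm.Fs τ) :
    Tm.Ob σ = Tm.Ob τ := by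
  obtain ⟨c, h1, h2⟩ := Tm.conv_join h
  have e1 := (Tm.pars_fs h1 hσ).2
  have e2 := (Tm.pars_fs h2 hτ).2
  rw [← e1, e2]

theorem defEq_doms {K₁ K₂ : Tm} (h : DefEq K₁ K₂) (h1 : Tm.Ks K₁) (h2 : Tm.Ks K₂) :
    Tm.Doms K₁ = Tm.Doms K₂ := by
  obtain ⟨c, g1, g2⟩ := Tm.conv_join h
  have e1 := (Tm.pars_ks g1 h1).2
  have e2 := (Tm.pars_ks g2 h2).2
  rw [← e1, e2]


/-- Forgetful translation into the target calculus. -/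
def trT : Tm → TT
| .type => .cst 0
| .pi σ τ => .pair (trT σ) (.lam (trT τ))
| .rarr σ τ => .pair (trT σ) (trT τ)
| .inter σ τ => .pair (trT σ) (trT τ)
| .union σ τ => .pair (trT σ) (trT τ)
| .const c => .cst c
| .var n => .var n
| .lam σ Δ => .app (.lam (.lam (TT.lift 1 (trT Δ)))) (trT σ)
| .app a b => .app (trT a) (trT b)
| .rlam σ Δ => .app (.lam (.lam (TT.lift 1 (trT Δ)))) (trT σ)
| .rapp a b => .app (trT a) (trT b)
| .pair a b => .pair (trT a) (trT b)
| .copair a b => .pair (trT a) (trT b)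
| .prl a => .fst (trT a)
| .prr a => .snd (trT a)
| .inl σ a => .app (.lam (.inl (TT.lift 0 (trT a)))) (trT σ)
| .inr σ a => .app (.lam (.inr (TT.lift 0 (trT a)))) (trT σ)

theorem lift1_ren_extr (ξ : ℕ → ℕ) (X : TT) :
    TT.lift 1 (TT.ren (TT.extr ξ) X) = TT.ren (TT.extr (TT.extr ξ)) (TT.lift 1 X) := by
  simp only [TT.lift, TT.ren_ren]
  refine TT.ren_ext (fun n => ?_) X
  cases n with
  | zero => rfl
  | succ n => simp [TT.extr, TT.liftF]

theorem lift0_ren_extr (ξ : ℕ → ℕ) (X : TT) :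
    TT.lift 0 (TT.ren ξ X) = TT.ren (TT.extr ξ) (TT.lift 0 X) := by
  simp only [TT.lift, TT.ren_ren]
  refine TT.ren_ext (fun n => ?_) X
  simp [TT.extr, TT.liftF]

theorem lift1_sub_exts (θ : ℕ → TT) (X : TT) :
    TT.lift 1 (TT.sub (TT.exts θ) X) = TT.sub (TT.exts (TT.exts θ)) (TT.lift 1 X) := by
  simp only [TT.lift, TT.ren_sub, TT.sub_ren]
  refine TT.sub_ext (fun n => ?_) X
  cases n with
  | zero => rfl
  | succ n =>
      have e1 : TT.exts θ (n+1) = TT.ren Nat.succ (θ n) := rfl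
      have e2 : TT.liftF 1 (n+1) = n + 2 := by simp [TT.liftF]
      rw [e1, TT.ren_ren, e2]
      have e3 : TT.exts (TT.exts θ) (n+2) = TT.ren Nat.succ (TT.exts θ (n+1)) := rfl
      rw [e3, e1, TT.ren_ren]
      refine TT.ren_ext (fun m => ?_) (θ n)
      simp [TT.liftF]

theorem lift0_sub_exts (θ : ℕ → TT) (X : TT) :
    TT.lift 0 (TT.sub θ X) = TT.sub (TT.exts θ) (TT.lift 0 X) := by
  simp only [TT.lift, TT.ren_sub, TT.sub_ren]
  refine TT.sub_ext (fun n => ?_) X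
  have e1 : TT.liftF 0 n = n + 1 := by simp [TT.liftF]
  rw [e1]
  rfl

theorem trT_renT : ∀ (t : Tm) (ξ : ℕ → ℕ), trT (Tm.renT ξ t) = TT.ren ξ (trT t) := by
  intro t
  induction t with
  | type => intro ξ; rfl
  | const c => intro ξ; rfl
  | var n => intro ξ; rfl
  | pi σ τ ih1 ih2 =>
      intro ξ
      simp only [Tm.renT, trT, TT.ren]
      rw [ih1, ih2]
  | rarr σ τ ih1 ih2 =>
      intro ξ; simp only [Tm.renT, trT, TT.ren]; rw [ih1, ih2]
  | inter σ τ ih1 ih2 =>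
      intro ξ; simp only [Tm.renT, trT, TT.ren]; rw [ih1, ih2]
  | union σ τ ih1 ih2 =>
      intro ξ; simp only [Tm.renT, trT, TT.ren]; rw [ih1, ih2]
  | lam σ Δ ih1 ih2 =>
      intro ξ
      simp only [Tm.renT, trT, TT.ren]
      rw [ih1, ih2, lift1_ren_extr]
  | rlam σ Δ ih1 ih2 =>
      intro ξ
      simp only [Tm.renT, trT, TT.ren]
      rw [ih1, ih2, lift1_ren_extr]
  | app a b ih1 ih2 =>
      intro ξ; simp only [Tm.renT, trT, TT.ren]; rw [ih1, ih2]
  | rapp a b ih1 ih2 =>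
      intro ξ; simp only [Tm.renT, trT, TT.ren]; rw [ih1, ih2]
  | pair a b ih1 ih2 =>
      intro ξ; simp only [Tm.renT, trT, TT.ren]; rw [ih1, ih2]
  | copair a b ih1 ih2 =>
      intro ξ; simp only [Tm.renT, trT, TT.ren]; rw [ih1, ih2]
  | prl a ih => intro ξ; simp only [Tm.renT, trT, TT.ren]; rw [ih]
  | prr a ih => intro ξ; simp only [Tm.renT, trT, TT.ren]; rw [ih]
  | inl σ a ih1 ih2 =>
      intro ξ
      simp only [Tm.renT, trT, TT.ren]
      rw [ih1, ih2, lift0_ren_extr]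
  | inr σ a ih1 ih2 =>
      intro ξ
      simp only [Tm.renT, trT, TT.ren]
      rw [ih1, ih2, lift0_ren_extr]

theorem trT_extsT (ρ : ℕ → Tm) :
    ∀ n, trT (Tm.extsT ρ n) = TT.exts (fun m => trT (ρ m)) n := by
  intro n
  cases n with
  | zero => rfl
  | succ n =>
      have e1 : Tm.extsT ρ (n+1) = Tm.renT Nat.succ (ρ n) := rfl
      rw [e1, trT_renT]
      rfl

theorem trT_subT : ∀ (t : Tm) (ρ : ℕ → Tm),
    trT (Tm.subT ρ t) = TT.sub (fun n => trT (ρ n)) (trT t) := by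
  intro t
  induction t with
  | type => intro ρ; rfl
  | const c => intro ρ; rfl
  | var n => intro ρ; rfl
  | pi σ τ ih1 ih2 =>
      intro ρ
      simp only [Tm.subT, trT, TT.sub]
      rw [ih1, ih2, TT.sub_ext (trT_extsT ρ) _]
  | rarr σ τ ih1 ih2 =>
      intro ρ; simp only [Tm.subT, trT, TT.sub]; rw [ih1, ih2]
  | inter σ τ ih1 ih2 =>
      intro ρ; simp only [Tm.subT, trT, TT.sub]; rw [ih1, ih2]
  | union σ τ ih1 ih2 =>
      intro ρ; simp only [Tm.subT, trT, TT.sub]; rw [ih1, ih2]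
  | lam σ Δ ih1 ih2 =>
      intro ρ
      simp only [Tm.subT, trT, TT.sub]
      rw [ih1, ih2, TT.sub_ext (trT_extsT ρ) _, lift1_sub_exts]
  | rlam σ Δ ih1 ih2 =>
      intro ρ
      simp only [Tm.subT, trT, TT.sub]
      rw [ih1, ih2, TT.sub_ext (trT_extsT ρ) _, lift1_sub_exts]
  | app a b ih1 ih2 =>
      intro ρ; simp only [Tm.subT, trT, TT.sub]; rw [ih1, ih2]
  | rapp a b ih1 ih2 =>
      intro ρ; simp only [Tm.subT, trT, TT.sub]; rw [ih1, ih2]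
  | pair a b ih1 ih2 =>
      intro ρ; simp only [Tm.subT, trT, TT.sub]; rw [ih1, ih2]
  | copair a b ih1 ih2 =>
      intro ρ; simp only [Tm.subT, trT, TT.sub]; rw [ih1, ih2]
  | prl a ih => intro ρ; simp only [Tm.subT, trT, TT.sub]; rw [ih]
  | prr a ih => intro ρ; simp only [Tm.subT, trT, TT.sub]; rw [ih]
  | inl σ a ih1 ih2 =>
      intro ρ
      simp only [Tm.subT, trT, TT.sub]
      rw [ih1, ih2, lift0_sub_exts]
  | inr σ a ih1 ih2 =>
      intro ρ
      simp only [Tm.subT, trT, TT.sub]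
      rw [ih1, ih2, lift0_sub_exts]

theorem trT_subst0 (a b : Tm) :
    trT (Tm.subst 0 a b) = TT.subst 0 (trT a) (trT b) := by
  rw [Tm.subst_eq_subT, trT_subT]
  refine TT.sub_ext (fun n => ?_) (trT b)
  cases n with
  | zero => rw [Tm.substFT_zero_zero, TT.substF_zero_zero]
  | succ n =>
      have e1 : Tm.substFT 0 a (n+1) = Tm.var n := by simp [Tm.substFT]
      have e2 : TT.substF 0 (trT a) (n+1) = TT.var n := by simp [TT.substF]
      rw [e1, e2]
      rfl

open TT in
abbrev TG : TT → TT → Prop := Relation.TransGen R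

namespace TT

theorem TG.appL {a b : TT} (N : TT) (h : TG a b) : TG (app a N) (app b N) := by
  induction h with
  | single h => exact Relation.TransGen.single (R.appL h)
  | tail _ h ih => exact ih.tail (R.appL h)

theorem TG.appR {a b : TT} (M : TT) (h : TG a b) : TG (app M a) (app M b) := by
  induction h with
  | single h => exact Relation.TransGen.single (R.appR h)
  | tail _ h ih => exact ih.tail (R.appR h)

theorem TG.pairL {a b : TT} (N : TT) (h : TG a b) : TG (pair a N) (pair b N) := by
  induction h with
  | single h => exact Relation.TransGen.single (R.pairL h)
  | tail _ h ih => exact ih.tail (R.pairL h)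

theorem TG.pairR {a b : TT} (M : TT) (h : TG a b) : TG (pair M a) (pair M b) := by
  induction h with
  | single h => exact Relation.TransGen.single (R.pairR h)
  | tail _ h ih => exact ih.tail (R.pairR h)

theorem TG.fstC {a b : TT} (h : TG a b) : TG (fst a) (fst b) := by
  induction h with
  | single h => exact Relation.TransGen.single (R.fstC h)
  | tail _ h ih => exact ih.tail (R.fstC h)

theorem TG.sndC {a b : TT} (h : TG a b) : TG (snd a) (snd b) := by
  induction h with
  | single h => exact Relation.TransGen.single (R.sndC h)
  | tail _ h ih => exact ih.tail (R.sndC h)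

theorem TG.inlC {a b : TT} (h : TG a b) : TG (inl a) (inl b) := by
  induction h with
  | single h => exact Relation.TransGen.single (R.inlC h)
  | tail _ h ih => exact ih.tail (R.inlC h)

theorem TG.inrC {a b : TT} (h : TG a b) : TG (inr a) (inr b) := by
  induction h with
  | single h => exact Relation.TransGen.single (R.inrC h)
  | tail _ h ih => exact ih.tail (R.inrC h)

theorem TG.lamC {a b : TT} (h : TG a b) : TG (lam a) (lam b) := by
  induction h with
  | single h => exact Relation.TransGen.single (R.lamC h)
  | tail _ h ih => exact ih.tail (R.lamC h)

theorem TG.liftc {a b : TT} (c : ℕ) (h : TG a b) : TG (lift c a) (lift c b) := by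
  induction h with
  | single h => exact Relation.TransGen.single (h.liftc c)
  | tail _ h ih => exact ih.tail (h.liftc c)

end TT

open TT in
/-- Every LF_Δ reduction step maps to at least one target step. -/
theorem step_sim {t u : Tm} (h : Step t u) : TG (trT t) (trT u) := by
  induction h with
  | @beta σ b a =>
      have e1 : TT.subst 0 (trT σ) (TT.lam (TT.lift 1 (trT b))) = TT.lam (trT b) := by
        rw [TT.subst_lam, TT.subst_lift_self]
      have hb : R (TT.app (TT.lam (TT.lam (TT.lift 1 (trT b)))) (trT σ)) (TT.lam (trT b)) := by
        have hbb := R.beta (M := TT.lam (TT.lift 1 (trT b))) (N := trT σ)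
        rwa [e1] at hbb
      have s1 : R (trT (Tm.app (Tm.lam σ b) a)) (TT.app (TT.lam (trT b)) (trT a)) := R.appL hb
      have s2 : R (TT.app (TT.lam (trT b)) (trT a)) (trT (Tm.subst 0 a b)) := by
        rw [trT_subst0]
        exact R.beta
      exact (Relation.TransGen.single s1).tail s2
  | @rbeta σ b a =>
      have e1 : TT.subst 0 (trT σ) (TT.lam (TT.lift 1 (trT b))) = TT.lam (trT b) := by
        rw [TT.subst_lam, TT.subst_lift_self]
      have hb : R (TT.app (TT.lam (TT.lam (TT.lift 1 (trT b)))) (trT σ)) (TT.lam (trT b)) := by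
        have hbb := R.beta (M := TT.lam (TT.lift 1 (trT b))) (N := trT σ)
        rwa [e1] at hbb
      have s1 : R (trT (Tm.rapp (Tm.rlam σ b) a)) (TT.app (TT.lam (trT b)) (trT a)) := R.appL hb
      have s2 : R (TT.app (TT.lam (trT b)) (trT a)) (trT (Tm.subst 0 a b)) := by
        rw [trT_subst0]
        exact R.beta
      exact (Relation.TransGen.single s1).tail s2
  | prl => exact Relation.TransGen.single R.fstPair
  | prr => exact Relation.TransGen.single R.sndPair
  | @coInl f g σ x =>
      have e1 : TT.subst 0 (trT σ) (TT.inl (TT.lift 0 (trT x))) = TT.inl (trT x) := by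
        have e0 : TT.subst 0 (trT σ) (TT.inl (TT.lift 0 (trT x)))
            = TT.inl (TT.subst 0 (trT σ) (TT.lift 0 (trT x))) := rfl
        rw [e0, TT.subst_lift_self]
      have hb : R (TT.app (TT.lam (TT.inl (TT.lift 0 (trT x)))) (trT σ)) (TT.inl (trT x)) := by
        have hbb := R.beta (M := TT.inl (TT.lift 0 (trT x))) (N := trT σ)
        rwa [e1] at hbb
      have s1 : R (trT (Tm.app (Tm.copair f g) (Tm.inl σ x)))
          (TT.app (TT.pair (trT f) (trT g)) (TT.inl (trT x))) := R.appR hb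
      exact (Relation.TransGen.single s1).tail R.caseL
  | @coInr f g σ x =>
      have e1 : TT.subst 0 (trT σ) (TT.inr (TT.lift 0 (trT x))) = TT.inr (trT x) := by
        have e0 : TT.subst 0 (trT σ) (TT.inr (TT.lift 0 (trT x)))
            = TT.inr (TT.subst 0 (trT σ) (TT.lift 0 (trT x))) := rfl
        rw [e0, TT.subst_lift_self]
      have hb : R (TT.app (TT.lam (TT.inr (TT.lift 0 (trT x)))) (trT σ)) (TT.inr (trT x)) := by
        have hbb := R.beta (M := TT.inr (TT.lift 0 (trT x))) (N := trT σ)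
        rwa [e1] at hbb
      have s1 : R (trT (Tm.app (Tm.copair f g) (Tm.inr σ x)))
          (TT.app (TT.pair (trT f) (trT g)) (TT.inr (trT x))) := R.appR hb
      exact (Relation.TransGen.single s1).tail R.caseR
  | piL _ ih => exact TG.pairL _ ih
  | piR _ ih => exact TG.pairR _ (TG.lamC ih)
  | rarrL _ ih => exact TG.pairL _ ih
  | rarrR _ ih => exact TG.pairR _ ih
  | interL _ ih => exact TG.pairL _ ih
  | interR _ ih => exact TG.pairR _ ih
  | unionL _ ih => exact TG.pairL _ ih
  | unionR _ ih => exact TG.pairR _ ih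
  | lamL _ ih => exact TG.appR _ ih
  | lamR _ ih => exact TG.appL _ (TG.lamC (TG.lamC (TG.liftc 1 ih)))
  | rlamL _ ih => exact TG.appR _ ih
  | rlamR _ ih => exact TG.appL _ (TG.lamC (TG.lamC (TG.liftc 1 ih)))
  | appL _ ih => exact TG.appL _ ih
  | appR _ ih => exact TG.appR _ ih
  | rappL _ ih => exact TG.appL _ ih
  | rappR _ ih => exact TG.appR _ ih
  | prlC _ ih => exact TG.fstC ih
  | prrC _ ih => exact TG.sndC ih
  | inlL _ ih => exact TG.appR _ ih
  | inlR _ ih => exact TG.appL _ (TG.lamC (TG.inlC (TG.liftc 0 ih)))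
  | inrL _ ih => exact TG.appR _ ih
  | inrR _ ih => exact TG.appL _ (TG.lamC (TG.inrC (TG.liftc 0 ih)))
  | pairC _ _ _ ih1 ih2 => exact (TG.pairL _ ih1).trans (TG.pairR _ ih2)
  | copairC _ _ _ ih1 ih2 => exact (TG.pairL _ ih1).trans (TG.pairR _ ih2)

/-- SN transfers back along the translation. -/
theorem TG.flip {a b : TT} (h : TG a b) :
    Relation.TransGen (fun x y : TT => TT.R y x) b a := by
  induction h with
  | single h => exact Relation.TransGen.single h
  | tail _ h ih => exact Relation.TransGen.head h ih

theorem sn_of_trT {t : Tm} (h : TT.SN (trT t)) : SNTm t := by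
  have hacc : Acc (Relation.TransGen (fun a b : TT => TT.R b a)) (trT t) := h.transGen
  have key : ∀ x : TT, Acc (Relation.TransGen (fun a b : TT => TT.R b a)) x →
      ∀ s : Tm, x = trT s → SNTm s := by
    intro x hx
    induction hx with
    | intro x _ ih =>
        rintro s rfl
        constructor
        intro y hy
        exact ih (trT y) (TG.flip (step_sim hy)) y rfl
  exact key _ hacc t rfl


/-! ### Main induction over the typing judgments -/

def Match : List ST → ST → Prop
| [], _ => True
| D :: l, A => ∃ B, A = ST.arr D B ∧ Match l B

def chainTy : List ST → ST
| [] => ST.top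
| D :: l => ST.arr D (chainTy l)

theorem match_chain : ∀ l, Match l (chainTy l)
| [] => trivial
| _ :: l => ⟨chainTy l, rfl, match_chain l⟩

def obCtx (Γ : Ctx) : List ST := Γ.map Tm.Ob

def CtxTr (Γ : Ctx) : Prop :=
  ∀ i σ, Γ[i]? = some σ → ∃ A, TY (obCtx (Γ.drop (i+1))) (trT σ) A

def SigShaped (S : Sig) : Prop :=
  (∀ a K, SigEntry.kd a K ∈ S → Tm.Ks K) ∧ (∀ c σ, SigEntry.ty c σ ∈ S → Tm.Fs σ)

def P1 (S : Sig) : Prop := SigShaped S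
def P2 (S : Sig) (Γ : Ctx) : Prop := SigShaped S ∧ (∀ σ ∈ Γ, Tm.Fs σ) ∧ CtxTr Γ
def P3 (S : Sig) (Γ : Ctx) (K : Tm) : Prop :=
  P2 S Γ ∧ Tm.Ks K ∧ ∃ A, TY (obCtx Γ) (trT K) A
def P4 (S : Sig) (Γ : Ctx) (σ K : Tm) : Prop :=
  P2 S Γ ∧ Tm.Fs σ ∧ Tm.Ks K ∧ ∃ A, TY (obCtx Γ) (trT σ) A ∧ Match (Tm.Doms K) A
def P5 (S : Sig) (Γ : Ctx) (Δ σ : Tm) : Prop :=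
  P2 S Γ ∧ Tm.Fs σ ∧ TY (obCtx Γ) (trT Δ) (Tm.Ob σ)

theorem P2_tail {S : Sig} {σ : Tm} {Γ : Ctx} (h : P2 S (σ :: Γ)) :
    P2 S Γ ∧ Tm.Fs σ ∧ ∃ A, TY (obCtx Γ) (trT σ) A := by
  obtain ⟨hs, hfs, htr⟩ := h
  refine ⟨⟨hs, fun τ hτ => hfs τ (List.mem_cons_of_mem _ hτ), fun i τ hget => ?_⟩,
    hfs σ (List.mem_cons_self), ?_⟩
  · exact htr (i+1) τ hget
  · exact htr 0 σ rfl

theorem varTy_fact {Γ : Ctx} {n : ℕ} {σ : Tm} (h : VarTy Γ n σ)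
    (hΓ : ∀ τ ∈ Γ, Tm.Fs τ) :
    Tm.Fs σ ∧ (obCtx Γ)[n]? = some (Tm.Ob σ) := by
  induction h with
  | @zero Γ' σ₀ =>
      refine ⟨Tm.fs_lift 0 (hΓ σ₀ (List.mem_cons_self)), ?_⟩
      simp [obCtx, Tm.ob_lift]
  | @succ Γ' n' σ₀ τ' h' ih =>
      obtain ⟨f1, f2⟩ := ih (fun τ hτ => hΓ τ (List.mem_cons_of_mem _ hτ))
      refine ⟨Tm.fs_lift 0 f1, ?_⟩
      have e : (obCtx (τ' :: Γ'))[n'+1]? = (obCtx Γ')[n']? := rfl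
      rw [e, f2, Tm.ob_lift]

section Cases

theorem case_sig_nil : P1 [] :=
  ⟨fun _ _ h => absurd h (List.not_mem_nil), fun _ _ h => absurd h (List.not_mem_nil)⟩

theorem case_sig_kd {S : Sig} {a : ℕ} {K : Tm}
    (_ : SigOk S) (_ : KindOk S [] K) (_ : ¬ inDom S a)
    (ih1 : P1 S) (ih2 : P3 S [] K) : P1 (SigEntry.kd a K :: S) := by
  obtain ⟨s1, s2⟩ := ih1
  refine ⟨fun a' K' hmem => ?_, fun c' σ' hmem => ?_⟩
  · rcases List.mem_cons.mp hmem with heq | hmem'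
    · injection heq with h1 h2
      subst h2
      exact ih2.2.1
    · exact s1 a' K' hmem'
  · rcases List.mem_cons.mp hmem with heq | hmem'
    · exact SigEntry.noConfusion heq
    · exact s2 c' σ' hmem'

theorem case_sig_ty {S : Sig} {c : ℕ} {σ : Tm}
    (_ : SigOk S) (_ : FamTy S [] σ Tm.type) (_ : ¬ inDom S c)
    (ih1 : P1 S) (ih2 : P4 S [] σ Tm.type) : P1 (SigEntry.ty c σ :: S) := by
  obtain ⟨s1, s2⟩ := ih1
  refine ⟨fun a' K' hmem => ?_, fun c' σ' hmem => ?_⟩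
  · rcases List.mem_cons.mp hmem with heq | hmem'
    · exact SigEntry.noConfusion heq
    · exact s1 a' K' hmem'
  · rcases List.mem_cons.mp hmem with heq | hmem'
    · injection heq with h1 h2
      subst h2
      exact ih2.2.1
    · exact s2 c' σ' hmem'

theorem case_ctx_nil {S : Sig} (_ : SigOk S) (ih : P1 S) : P2 S [] :=
  ⟨ih, fun _ h => absurd h (List.not_mem_nil),
    fun i σ h => by cases i <;> simp at h⟩

theorem case_ctx_cons {S : Sig} {Γ : Ctx} {σ : Tm}
    (_ : CtxOk S Γ) (_ : FamTy S Γ σ Tm.type)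
    (ih1 : P2 S Γ) (ih2 : P4 S Γ σ Tm.type) : P2 S (σ :: Γ) := by
  refine ⟨ih1.1, fun τ hτ => ?_, fun i τ hget => ?_⟩
  · rcases List.mem_cons.mp hτ with rfl | hτ'
    · exact ih2.2.1
    · exact ih1.2.1 τ hτ'
  · cases i with
    | zero =>
        injection hget with hget'
        subst hget'
        obtain ⟨A, tyA, _⟩ := ih2.2.2.2
        exact ⟨A, tyA⟩
    | succ i => exact ih1.2.2 i τ hget

theorem case_kind_type {S : Sig} {Γ : Ctx} (_ : CtxOk S Γ) (ih : P2 S Γ) :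
    P3 S Γ Tm.type :=
  ⟨ih, trivial, ⟨ST.top, TY.cst⟩⟩

theorem case_kind_pi {S : Sig} {Γ : Ctx} {σ K : Tm}
    (_ : FamTy S Γ σ Tm.type) (_ : KindOk S (σ :: Γ) K)
    (ih1 : P4 S Γ σ Tm.type) (ih2 : P3 S (σ :: Γ) K) : P3 S Γ (Tm.pi σ K) := by
  obtain ⟨Aσ, tyσ, _⟩ := ih1.2.2.2
  obtain ⟨AK, tyK⟩ := ih2.2.2
  exact ⟨ih1.1, ⟨ih1.2.1, ih2.2.1⟩, ⟨ST.prod Aσ (ST.arr (Tm.Ob σ) AK),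
    TY.pairP tyσ (TY.lam tyK)⟩⟩

theorem case_fam_const {S : Sig} {Γ : Ctx} {a : ℕ} {K : Tm}
    (_ : CtxOk S Γ) (hmem : SigEntry.kd a K ∈ S) (ih1 : P2 S Γ) :
    P4 S Γ (Tm.const a) K :=
  ⟨ih1, trivial, ih1.1.1 a K hmem, ⟨chainTy (Tm.Doms K), TY.cst, match_chain _⟩⟩

theorem case_fam_pi {S : Sig} {Γ : Ctx} {σ τ : Tm}
    (_ : FamTy S Γ σ Tm.type) (_ : FamTy S (σ :: Γ) τ Tm.type)
    (ih1 : P4 S Γ σ Tm.type) (ih2 : P4 S (σ :: Γ) τ Tm.type) :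
    P4 S Γ (Tm.pi σ τ) Tm.type := by
  obtain ⟨Aσ, tyσ, _⟩ := ih1.2.2.2
  obtain ⟨Aτ, tyτ, _⟩ := ih2.2.2.2
  exact ⟨ih1.1, ⟨ih1.2.1, ih2.2.1⟩, trivial,
    ⟨ST.prod Aσ (ST.arr (Tm.Ob σ) Aτ), TY.pairP tyσ (TY.lam tyτ), trivial⟩⟩

theorem case_fam_app {S : Sig} {Γ : Ctx} {σ τ K Δ : Tm}
    (_ : FamTy S Γ σ (Tm.pi τ K)) (_ : ObjTy S Γ Δ τ)
    (ih1 : P4 S Γ σ (Tm.pi τ K)) (ih2 : P5 S Γ Δ τ) :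
    P4 S Γ (Tm.app σ Δ) (Tm.subst 0 Δ K) := by
  obtain ⟨hfsτ, hksK⟩ := ih1.2.2.1
  obtain ⟨A, tyσ, hmatch⟩ := ih1.2.2.2
  obtain ⟨B, rfl, hm⟩ := hmatch
  refine ⟨ih1.1, ih1.2.1, Tm.ks_subst 0 Δ hksK, ⟨B, TY.app tyσ ih2.2.2, ?_⟩⟩
  rw [Tm.doms_subst 0 Δ hksK]
  exact hm

theorem case_fam_rarr {S : Sig} {Γ : Ctx} {σ τ : Tm}
    (_ : FamTy S Γ σ Tm.type) (_ : FamTy S Γ τ Tm.type)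
    (ih1 : P4 S Γ σ Tm.type) (ih2 : P4 S Γ τ Tm.type) :
    P4 S Γ (Tm.rarr σ τ) Tm.type := by
  obtain ⟨Aσ, tyσ, _⟩ := ih1.2.2.2
  obtain ⟨Aτ, tyτ, _⟩ := ih2.2.2.2
  exact ⟨ih1.1, ⟨ih1.2.1, ih2.2.1⟩, trivial, ⟨ST.prod Aσ Aτ, TY.pairP tyσ tyτ, trivial⟩⟩

theorem case_fam_inter {S : Sig} {Γ : Ctx} {σ τ : Tm}
    (_ : FamTy S Γ σ Tm.type) (_ : FamTy S Γ τ Tm.type)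
    (ih1 : P4 S Γ σ Tm.type) (ih2 : P4 S Γ τ Tm.type) :
    P4 S Γ (Tm.inter σ τ) Tm.type := by
  obtain ⟨Aσ, tyσ, _⟩ := ih1.2.2.2
  obtain ⟨Aτ, tyτ, _⟩ := ih2.2.2.2
  exact ⟨ih1.1, ⟨ih1.2.1, ih2.2.1⟩, trivial, ⟨ST.prod Aσ Aτ, TY.pairP tyσ tyτ, trivial⟩⟩

theorem case_fam_union {S : Sig} {Γ : Ctx} {σ τ : Tm}
    (_ : FamTy S Γ σ Tm.type) (_ : FamTy S Γ τ Tm.type)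
    (ih1 : P4 S Γ σ Tm.type) (ih2 : P4 S Γ τ Tm.type) :
    P4 S Γ (Tm.union σ τ) Tm.type := by
  obtain ⟨Aσ, tyσ, _⟩ := ih1.2.2.2
  obtain ⟨Aτ, tyτ, _⟩ := ih2.2.2.2
  exact ⟨ih1.1, ⟨ih1.2.1, ih2.2.1⟩, trivial, ⟨ST.prod Aσ Aτ, TY.pairP tyσ tyτ, trivial⟩⟩

theorem case_fam_conv {S : Sig} {Γ : Ctx} {σ K₁ K₂ : Tm}
    (_ : FamTy S Γ σ K₁) (_ : KindOk S Γ K₂) (hdef : DefEq K₁ K₂)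
    (ih1 : P4 S Γ σ K₁) (ih2 : P3 S Γ K₂) : P4 S Γ σ K₂ := by
  obtain ⟨A, tyσ, hm⟩ := ih1.2.2.2
  refine ⟨ih1.1, ih1.2.1, ih2.2.1, ⟨A, tyσ, ?_⟩⟩
  rw [← defEq_doms hdef ih1.2.2.1 ih2.2.1]
  exact hm

theorem case_obj_const {S : Sig} {Γ : Ctx} {c : ℕ} {σ : Tm}
    (_ : CtxOk S Γ) (hmem : SigEntry.ty c σ ∈ S) (ih1 : P2 S Γ) :
    P5 S Γ (Tm.const c) σ :=
  ⟨ih1, ih1.1.2 c σ hmem, TY.cst⟩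

theorem case_obj_var {S : Sig} {Γ : Ctx} {n : ℕ} {σ : Tm}
    (_ : CtxOk S Γ) (hvar : VarTy Γ n σ) (ih1 : P2 S Γ) :
    P5 S Γ (Tm.var n) σ := by
  obtain ⟨f1, f2⟩ := varTy_fact hvar ih1.2.1
  exact ⟨ih1, f1, TY.var f2⟩

theorem case_obj_lam {S : Sig} {Γ : Ctx} {σ τ Δ : Tm}
    (_ : ObjTy S (σ :: Γ) Δ τ) (ih1 : P5 S (σ :: Γ) Δ τ) :
    P5 S Γ (Tm.lam σ Δ) (Tm.pi σ τ) := by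
  obtain ⟨hp2c, fsτ, tyΔ⟩ := ih1
  obtain ⟨hp2, fsσ, ⟨Aσ, tyσ⟩⟩ := P2_tail hp2c
  refine ⟨hp2, ⟨fsσ, fsτ⟩, ?_⟩
  have body : TY (Tm.Ob σ :: Aσ :: obCtx Γ) (TT.lift 1 (trT Δ)) (Tm.Ob τ) :=
    TY.weak1 Aσ tyΔ
  exact TY.app (TY.lam (TY.lam body)) tyσ

theorem case_obj_app {S : Sig} {Γ : Ctx} {σ τ Δ₁ Δ₂ : Tm}
    (_ : ObjTy S Γ Δ₁ (Tm.pi σ τ)) (_ : ObjTy S Γ Δ₂ σ)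
    (ih1 : P5 S Γ Δ₁ (Tm.pi σ τ)) (ih2 : P5 S Γ Δ₂ σ) :
    P5 S Γ (Tm.app Δ₁ Δ₂) (Tm.subst 0 Δ₂ τ) := by
  obtain ⟨hp2, ⟨fsσ, fsτ⟩, ty1⟩ := ih1
  refine ⟨hp2, Tm.fs_subst 0 Δ₂ fsτ, ?_⟩
  have e : Tm.Ob (Tm.subst 0 Δ₂ τ) = Tm.Ob τ := Tm.ob_subst 0 Δ₂ fsτ
  rw [e]
  exact TY.app ty1 ih2.2.2

theorem case_obj_rlam {S : Sig} {Γ : Ctx} {σ τ Δ : Tm}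
    (_ : ObjTy S (σ :: Γ) Δ (Tm.lift 0 τ))
    (_ : Lam.BetaEtaEq (essence Δ) (Lam.var 0))
    (ih1 : P5 S (σ :: Γ) Δ (Tm.lift 0 τ)) :
    P5 S Γ (Tm.rlam σ Δ) (Tm.rarr σ τ) := by
  obtain ⟨hp2c, fsl, tyΔ⟩ := ih1
  obtain ⟨hp2, fsσ, ⟨Aσ, tyσ⟩⟩ := P2_tail hp2c
  refine ⟨hp2, ⟨fsσ, Tm.fs_lift_rev fsl⟩, ?_⟩
  rw [Tm.ob_lift] at tyΔ
  have body : TY (Tm.Ob σ :: Aσ :: obCtx Γ) (TT.lift 1 (trT Δ)) (Tm.Ob τ) :=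
    TY.weak1 Aσ tyΔ
  exact TY.app (TY.lam (TY.lam body)) tyσ

theorem case_obj_rapp {S : Sig} {Γ : Ctx} {σ τ Δ₁ Δ₂ : Tm}
    (_ : ObjTy S Γ Δ₁ (Tm.rarr σ τ)) (_ : ObjTy S Γ Δ₂ σ)
    (ih1 : P5 S Γ Δ₁ (Tm.rarr σ τ)) (ih2 : P5 S Γ Δ₂ σ) :
    P5 S Γ (Tm.rapp Δ₁ Δ₂) τ := by
  obtain ⟨hp2, ⟨fsσ, fsτ⟩, ty1⟩ := ih1
  exact ⟨hp2, fsτ, TY.app ty1 ih2.2.2⟩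

theorem case_obj_pair {S : Sig} {Γ : Ctx} {σ τ Δ₁ Δ₂ : Tm}
    (_ : ObjTy S Γ Δ₁ σ) (_ : ObjTy S Γ Δ₂ τ)
    (_ : Lam.BetaEtaEq (essence Δ₁) (essence Δ₂))
    (ih1 : P5 S Γ Δ₁ σ) (ih2 : P5 S Γ Δ₂ τ) :
    P5 S Γ (Tm.pair Δ₁ Δ₂) (Tm.inter σ τ) :=
  ⟨ih1.1, ⟨ih1.2.1, ih2.2.1⟩, TY.pairP ih1.2.2 ih2.2.2⟩

theorem case_obj_prl {S : Sig} {Γ : Ctx} {σ τ Δ : Tm}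
    (_ : ObjTy S Γ Δ (Tm.inter σ τ)) (ih1 : P5 S Γ Δ (Tm.inter σ τ)) :
    P5 S Γ (Tm.prl Δ) σ := by
  obtain ⟨hp2, ⟨fsσ, fsτ⟩, ty1⟩ := ih1
  exact ⟨hp2, fsσ, TY.fst ty1⟩

theorem case_obj_prr {S : Sig} {Γ : Ctx} {σ τ Δ : Tm}
    (_ : ObjTy S Γ Δ (Tm.inter σ τ)) (ih1 : P5 S Γ Δ (Tm.inter σ τ)) :
    P5 S Γ (Tm.prr Δ) τ := by
  obtain ⟨hp2, ⟨fsσ, fsτ⟩, ty1⟩ := ih1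
  exact ⟨hp2, fsτ, TY.snd ty1⟩

theorem case_obj_inl {S : Sig} {Γ : Ctx} {σ τ Δ : Tm}
    (_ : ObjTy S Γ Δ σ) (_ : FamTy S Γ (Tm.union σ τ) Tm.type)
    (ih1 : P5 S Γ Δ σ) (ih2 : P4 S Γ (Tm.union σ τ) Tm.type) :
    P5 S Γ (Tm.inl τ Δ) (Tm.union σ τ) := by
  obtain ⟨A, tyU, _⟩ := ih2.2.2.2
  obtain ⟨_, ⟨Aτ, tyτ⟩⟩ := ty_pair_inv tyU
  refine ⟨ih1.1, ih2.2.1, ?_⟩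
  have body : TY (Aτ :: obCtx Γ) (TT.inl (TT.lift 0 (trT Δ))) (ST.sum (Tm.Ob σ) (Tm.Ob τ)) :=
    TY.inl (TY.weak0 Aτ ih1.2.2)
  exact TY.app (TY.lam body) tyτ

theorem case_obj_inr {S : Sig} {Γ : Ctx} {σ τ Δ : Tm}
    (_ : ObjTy S Γ Δ τ) (_ : FamTy S Γ (Tm.union σ τ) Tm.type)
    (ih1 : P5 S Γ Δ τ) (ih2 : P4 S Γ (Tm.union σ τ) Tm.type) :
    P5 S Γ (Tm.inr σ Δ) (Tm.union σ τ) := by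
  obtain ⟨A, tyU, _⟩ := ih2.2.2.2
  obtain ⟨⟨Aσ, tyσ⟩, _⟩ := ty_pair_inv tyU
  refine ⟨ih1.1, ih2.2.1, ?_⟩
  have body : TY (Aσ :: obCtx Γ) (TT.inr (TT.lift 0 (trT Δ))) (ST.sum (Tm.Ob σ) (Tm.Ob τ)) :=
    TY.inr (TY.weak0 Aσ ih1.2.2)
  exact TY.app (TY.lam body) tyσ

theorem case_obj_copair {S : Sig} {Γ : Ctx} {σ τ ρ Δ₁ Δ₂ : Tm}
    (_ : ObjTy S Γ Δ₁ (Tm.pi σ (Tm.subst 0 (Tm.inl (Tm.lift 0 τ) (Tm.var 0)) (Tm.lift 1 ρ))))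
    (_ : ObjTy S Γ Δ₂ (Tm.pi τ (Tm.subst 0 (Tm.inr (Tm.lift 0 σ) (Tm.var 0)) (Tm.lift 1 ρ))))
    (_ : FamTy S (Tm.union σ τ :: Γ) ρ Tm.type)
    (_ : Lam.BetaEtaEq (essence Δ₁) (essence Δ₂))
    (ih1 : P5 S Γ Δ₁ (Tm.pi σ (Tm.subst 0 (Tm.inl (Tm.lift 0 τ) (Tm.var 0)) (Tm.lift 1 ρ))))
    (ih2 : P5 S Γ Δ₂ (Tm.pi τ (Tm.subst 0 (Tm.inr (Tm.lift 0 σ) (Tm.var 0)) (Tm.lift 1 ρ))))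
    (ih3 : P4 S (Tm.union σ τ :: Γ) ρ Tm.type) :
    P5 S Γ (Tm.copair Δ₁ Δ₂) (Tm.pi (Tm.union σ τ) ρ) := by
  have fsρ : Tm.Fs ρ := ih3.2.1
  have fsU : Tm.Fs (Tm.union σ τ) := ih3.1.2.1 _ (List.mem_cons_self)
  have e1 : Tm.Ob (Tm.subst 0 (Tm.inl (Tm.lift 0 τ) (Tm.var 0)) (Tm.lift 1 ρ)) = Tm.Ob ρ := by
    rw [Tm.ob_subst 0 _ (Tm.fs_lift 1 fsρ), Tm.ob_lift]
  have e2 : Tm.Ob (Tm.subst 0 (Tm.inr (Tm.lift 0 σ) (Tm.var 0)) (Tm.lift 1 ρ)) = Tm.Ob ρ := by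
    rw [Tm.ob_subst 0 _ (Tm.fs_lift 1 fsρ), Tm.ob_lift]
  have ty1 : TY (obCtx Γ) (trT Δ₁) (ST.arr (Tm.Ob σ) (Tm.Ob ρ)) := by
    have := ih1.2.2
    rw [show Tm.Ob (Tm.pi σ (Tm.subst 0 (Tm.inl (Tm.lift 0 τ) (Tm.var 0)) (Tm.lift 1 ρ)))
        = ST.arr (Tm.Ob σ) (Tm.Ob ρ) from by simp [Tm.Ob, e1]] at this
    exact this
  have ty2 : TY (obCtx Γ) (trT Δ₂) (ST.arr (Tm.Ob τ) (Tm.Ob ρ)) := by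
    have := ih2.2.2
    rw [show Tm.Ob (Tm.pi τ (Tm.subst 0 (Tm.inr (Tm.lift 0 σ) (Tm.var 0)) (Tm.lift 1 ρ)))
        = ST.arr (Tm.Ob τ) (Tm.Ob ρ) from by simp [Tm.Ob, e2]] at this
    exact this
  exact ⟨ih1.1, ⟨fsU, fsρ⟩, TY.pairS ty1 ty2⟩

theorem case_obj_conv {S : Sig} {Γ : Ctx} {σ τ Δ : Tm}
    (_ : ObjTy S Γ Δ σ) (_ : FamTy S Γ τ Tm.type) (hdef : DefEq σ τ)
    (ih1 : P5 S Γ Δ σ) (ih2 : P4 S Γ τ Tm.type) : P5 S Γ Δ τ := by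
  refine ⟨ih1.1, ih2.2.1, ?_⟩
  rw [← defEq_ob hdef ih1.2.1 ih2.2.1]
  exact ih1.2.2

end Cases

theorem main_kind {S : Sig} {Γ : Ctx} {K : Tm} (h : KindOk S Γ K) : P3 S Γ K := by
  refine KindOk.rec (motive_1 := fun S _ => P1 S) (motive_2 := fun S Γ _ => P2 S Γ)
    (motive_3 := fun S Γ K _ => P3 S Γ K) (motive_4 := fun S Γ σ K _ => P4 S Γ σ K)
    (motive_5 := fun S Γ Δ σ _ => P5 S Γ Δ σ)
    case_sig_nil
    (fun h1 h2 h3 ih1 ih2 => case_sig_kd h1 h2 h3 ih1 ih2)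
    (fun h1 h2 h3 ih1 ih2 => case_sig_ty h1 h2 h3 ih1 ih2)
    (fun h1 ih1 => case_ctx_nil h1 ih1)
    (fun h1 h2 ih1 ih2 => case_ctx_cons h1 h2 ih1 ih2)
    (fun h1 ih1 => case_kind_type h1 ih1)
    (fun h1 h2 ih1 ih2 => case_kind_pi h1 h2 ih1 ih2)
    (fun h1 h2 ih1 => case_fam_const h1 h2 ih1)
    (fun h1 h2 ih1 ih2 => case_fam_pi h1 h2 ih1 ih2)
    (fun h1 h2 ih1 ih2 => case_fam_app h1 h2 ih1 ih2)
    (fun h1 h2 ih1 ih2 => case_fam_rarr h1 h2 ih1 ih2)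
    (fun h1 h2 ih1 ih2 => case_fam_inter h1 h2 ih1 ih2)
    (fun h1 h2 ih1 ih2 => case_fam_union h1 h2 ih1 ih2)
    (fun h1 h2 h3 ih1 ih2 => case_fam_conv h1 h2 h3 ih1 ih2)
    (fun h1 h2 ih1 => case_obj_const h1 h2 ih1)
    (fun h1 h2 ih1 => case_obj_var h1 h2 ih1)
    (fun h1 ih1 => case_obj_lam h1 ih1)
    (fun h1 h2 ih1 ih2 => case_obj_app h1 h2 ih1 ih2)
    (fun h1 h2 ih1 => case_obj_rlam h1 h2 ih1)
    (fun h1 h2 ih1 ih2 => case_obj_rapp h1 h2 ih1 ih2)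
    (fun h1 h2 h3 ih1 ih2 => case_obj_pair h1 h2 h3 ih1 ih2)
    (fun h1 ih1 => case_obj_prl h1 ih1)
    (fun h1 ih1 => case_obj_prr h1 ih1)
    (fun h1 h2 ih1 ih2 => case_obj_inl h1 h2 ih1 ih2)
    (fun h1 h2 ih1 ih2 => case_obj_inr h1 h2 ih1 ih2)
    (fun h1 h2 h3 h4 ih1 ih2 ih3 => case_obj_copair h1 h2 h3 h4 ih1 ih2 ih3)
    (fun h1 h2 h3 ih1 ih2 => case_obj_conv h1 h2 h3 ih1 ih2)
    h

theorem main_fam {S : Sig} {Γ : Ctx} {σ K : Tm} (h : FamTy S Γ σ K) : P4 S Γ σ K := by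
  refine FamTy.rec (motive_1 := fun S _ => P1 S) (motive_2 := fun S Γ _ => P2 S Γ)
    (motive_3 := fun S Γ K _ => P3 S Γ K) (motive_4 := fun S Γ σ K _ => P4 S Γ σ K)
    (motive_5 := fun S Γ Δ σ _ => P5 S Γ Δ σ)
    case_sig_nil
    (fun h1 h2 h3 ih1 ih2 => case_sig_kd h1 h2 h3 ih1 ih2)
    (fun h1 h2 h3 ih1 ih2 => case_sig_ty h1 h2 h3 ih1 ih2)
    (fun h1 ih1 => case_ctx_nil h1 ih1)
    (fun h1 h2 ih1 ih2 => case_ctx_cons h1 h2 ih1 ih2)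
    (fun h1 ih1 => case_kind_type h1 ih1)
    (fun h1 h2 ih1 ih2 => case_kind_pi h1 h2 ih1 ih2)
    (fun h1 h2 ih1 => case_fam_const h1 h2 ih1)
    (fun h1 h2 ih1 ih2 => case_fam_pi h1 h2 ih1 ih2)
    (fun h1 h2 ih1 ih2 => case_fam_app h1 h2 ih1 ih2)
    (fun h1 h2 ih1 ih2 => case_fam_rarr h1 h2 ih1 ih2)
    (fun h1 h2 ih1 ih2 => case_fam_inter h1 h2 ih1 ih2)
    (fun h1 h2 ih1 ih2 => case_fam_union h1 h2 ih1 ih2)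
    (fun h1 h2 h3 ih1 ih2 => case_fam_conv h1 h2 h3 ih1 ih2)
    (fun h1 h2 ih1 => case_obj_const h1 h2 ih1)
    (fun h1 h2 ih1 => case_obj_var h1 h2 ih1)
    (fun h1 ih1 => case_obj_lam h1 ih1)
    (fun h1 h2 ih1 ih2 => case_obj_app h1 h2 ih1 ih2)
    (fun h1 h2 ih1 => case_obj_rlam h1 h2 ih1)
    (fun h1 h2 ih1 ih2 => case_obj_rapp h1 h2 ih1 ih2)
    (fun h1 h2 h3 ih1 ih2 => case_obj_pair h1 h2 h3 ih1 ih2)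
    (fun h1 ih1 => case_obj_prl h1 ih1)
    (fun h1 ih1 => case_obj_prr h1 ih1)
    (fun h1 h2 ih1 ih2 => case_obj_inl h1 h2 ih1 ih2)
    (fun h1 h2 ih1 ih2 => case_obj_inr h1 h2 ih1 ih2)
    (fun h1 h2 h3 h4 ih1 ih2 ih3 => case_obj_copair h1 h2 h3 h4 ih1 ih2 ih3)
    (fun h1 h2 h3 ih1 ih2 => case_obj_conv h1 h2 h3 ih1 ih2)
    h

theorem main_obj {S : Sig} {Γ : Ctx} {Δ σ : Tm} (h : ObjTy S Γ Δ σ) : P5 S Γ Δ σ := by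
  refine ObjTy.rec (motive_1 := fun S _ => P1 S) (motive_2 := fun S Γ _ => P2 S Γ)
    (motive_3 := fun S Γ K _ => P3 S Γ K) (motive_4 := fun S Γ σ K _ => P4 S Γ σ K)
    (motive_5 := fun S Γ Δ σ _ => P5 S Γ Δ σ)
    case_sig_nil
    (fun h1 h2 h3 ih1 ih2 => case_sig_kd h1 h2 h3 ih1 ih2)
    (fun h1 h2 h3 ih1 ih2 => case_sig_ty h1 h2 h3 ih1 ih2)
    (fun h1 ih1 => case_ctx_nil h1 ih1)
    (fun h1 h2 ih1 ih2 => case_ctx_cons h1 h2 ih1 ih2)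
    (fun h1 ih1 => case_kind_type h1 ih1)
    (fun h1 h2 ih1 ih2 => case_kind_pi h1 h2 ih1 ih2)
    (fun h1 h2 ih1 => case_fam_const h1 h2 ih1)
    (fun h1 h2 ih1 ih2 => case_fam_pi h1 h2 ih1 ih2)
    (fun h1 h2 ih1 ih2 => case_fam_app h1 h2 ih1 ih2)
    (fun h1 h2 ih1 ih2 => case_fam_rarr h1 h2 ih1 ih2)
    (fun h1 h2 ih1 ih2 => case_fam_inter h1 h2 ih1 ih2)
    (fun h1 h2 ih1 ih2 => case_fam_union h1 h2 ih1 ih2)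
    (fun h1 h2 h3 ih1 ih2 => case_fam_conv h1 h2 h3 ih1 ih2)
    (fun h1 h2 ih1 => case_obj_const h1 h2 ih1)
    (fun h1 h2 ih1 => case_obj_var h1 h2 ih1)
    (fun h1 ih1 => case_obj_lam h1 ih1)
    (fun h1 h2 ih1 ih2 => case_obj_app h1 h2 ih1 ih2)
    (fun h1 h2 ih1 => case_obj_rlam h1 h2 ih1)
    (fun h1 h2 ih1 ih2 => case_obj_rapp h1 h2 ih1 ih2)
    (fun h1 h2 h3 ih1 ih2 => case_obj_pair h1 h2 h3 ih1 ih2)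
    (fun h1 ih1 => case_obj_prl h1 ih1)
    (fun h1 ih1 => case_obj_prr h1 ih1)
    (fun h1 h2 ih1 ih2 => case_obj_inl h1 h2 ih1 ih2)
    (fun h1 h2 ih1 ih2 => case_obj_inr h1 h2 ih1 ih2)
    (fun h1 h2 h3 h4 ih1 ih2 ih3 => case_obj_copair h1 h2 h3 h4 ih1 ih2 ih3)
    (fun h1 h2 h3 ih1 ih2 => case_obj_conv h1 h2 h3 ih1 ih2)
    h

/-- Strong normalization of LF_Δ: every well-formed kind, family and object
    is strongly normalizing with respect to →_Δ. -/
theorem lfdelta_strong_normalization :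
    (∀ (S : Sig) (Γ : Ctx) (K : Tm), KindOk S Γ K → SNTm K) ∧
    (∀ (S : Sig) (Γ : Ctx) (σ K : Tm), FamTy S Γ σ K → SNTm σ) ∧
    (∀ (S : Sig) (Γ : Ctx) (Δ σ : Tm), ObjTy S Γ Δ σ → SNTm Δ) := by
  refine ⟨?_, ?_, ?_⟩
  · intro S Γ K h
    obtain ⟨A, ty⟩ := (main_kind h).2.2
    exact sn_of_trT ty.sn
  · intro S Γ σ K h
    obtain ⟨A, ty, _⟩ := (main_fam h).2.2.2
    exact sn_of_trT ty.sn
  · intro S Γ Δ σ h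
    exact sn_of_trT (main_obj h).2.2.sn

end LFDelta
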